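/- arXiv:1601.06118 — 5 statements merged into one kernel-verified Lean document; each statement's English description precedes it below -/
import Mathlib

section
/- Let (f,A) be an analytic cocycle over a compact, connected measure space (X,μ) (X a compact connected real analytic manifold, μ a Borel probability measure whose pushforward under every analytic chart has a continuous density with respect to Lebesgue measure, f : X → X analytic and μ-preserving, A : X → ℂ^{d×d} real analytic). Suppose that for some n ≥ 1, m > 0 and r one has rank A_n(x) ≤ r for all x ∈ X and rank A_{n+m}(x) < r for all x ∈ X. Then rank A_{n+1}(x) < r for all x ∈ X. -/
open MeasureTheory Filter Topology

/-- Iterates of the linear cocycle `(f, A)`: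
`A_n(x) = A(f^[n-1] x) ⋯ A(f x) A(x)`. -/
noncomputable def cocycleIter {X : Type*} {d : ℕ} (f : X → X)
    (A : X → Matrix (Fin d) (Fin d) ℂ) : ℕ → X → Matrix (Fin d) (Fin d) ℂ
  | 0, _ => 1
  | n + 1, x => cocycleIter f A n (f x) * A x

/-- The `k`-th largest singular value of a matrix, `1 ≤ k ≤ d`, via the
Courant–Fischer max–min characterization. -/
noncomputable def singVal {d : ℕ} (k : ℕ) (M : Matrix (Fin d) (Fin d) ℂ) : ℝ :=
  sSup {t : ℝ | ∃ V : Submodule ℂ (EuclideanSpace ℂ (Fin d)),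
    Module.finrank ℂ V = k ∧ ∀ v ∈ V, t * ‖v‖ ≤ ‖(Matrix.toEuclideanLin M) v‖}

/-- The integral `∫ ln(g) dμ`, valued in `[-∞,∞]` (here `ln 0 = -∞`); by convention it is
`-∞` whenever the negative part of `ln g` is not `μ`-integrable. -/
noncomputable def elogIntegral {X : Type*} [MeasurableSpace X] (μ : Measure X) (g : X → ℝ) :
    EReal :=
  if μ {x | g x = 0} = 0 ∧ (∫⁻ x, ENNReal.ofReal (-Real.log (g x)) ∂μ) ≠ ⊤ then
    (∫⁻ x, ENNReal.ofReal (Real.log (g x)) ∂μ).toEReal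
      - (∫⁻ x, ENNReal.ofReal (-Real.log (g x)) ∂μ).toEReal
  else ⊥

/-- `L₁(f, A) = -∞`: the top Lyapunov exponent of the cocycle `(f,A)`, i.e.
`lim_n (1/n) ∫ ln ‖A_n(x)‖ dμ(x)` (with `‖·‖ = σ₁` the operator norm), is `-∞`. -/
def TopLyapunovEqBot {X : Type*} [MeasurableSpace X] (μ : Measure X) {d : ℕ}
    (f : X → X) (A : X → Matrix (Fin d) (Fin d) ℂ) : Prop :=
  Filter.Tendsto (fun n : ℕ => (((n : ℝ)⁻¹ : ℝ) : EReal)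
      * elogIntegral μ (fun x => singVal 1 (cocycleIter f A n x)))
    Filter.atTop (nhds ⊥)

/-- A map from the real analytic manifold `X` into a normed space is real analytic:
in every chart it is an analytic map. -/
def AnalyticOnMfd {ℓ : ℕ} {X : Type*} [TopologicalSpace X]
    [ChartedSpace (EuclideanSpace ℝ (Fin ℓ)) X]
    {F : Type*} [NormedAddCommGroup F] [NormedSpace ℝ F] (g : X → F) : Prop :=
  ∀ x : X, AnalyticAt ℝ (g ∘ (chartAt (EuclideanSpace ℝ (Fin ℓ)) x).symm)
    ((chartAt (EuclideanSpace ℝ (Fin ℓ)) x) x)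

/-- A self map of the real analytic manifold `X` is real analytic: it is continuous and,
read in the charts, analytic. -/
def AnalyticSelfMapMfd {ℓ : ℕ} {X : Type*} [TopologicalSpace X]
    [ChartedSpace (EuclideanSpace ℝ (Fin ℓ)) X] (f : X → X) : Prop :=
  Continuous f ∧ ∀ x : X, AnalyticAt ℝ
    ((chartAt (EuclideanSpace ℝ (Fin ℓ)) (f x)) ∘ f ∘ (chartAt (EuclideanSpace ℝ (Fin ℓ)) x).symm)
    ((chartAt (EuclideanSpace ℝ (Fin ℓ)) x) x)

/-- Assumption (A2): under every (analytic) chart, the push-forward of `μ` has a continuous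
density with respect to the Lebesgue measure. -/
def HasContinuousChartDensity {ℓ : ℕ} {X : Type*} [TopologicalSpace X]
    [ChartedSpace (EuclideanSpace ℝ (Fin ℓ)) X] [MeasurableSpace X] (μ : Measure X) : Prop :=
  ∀ x : X, ∃ ρ : EuclideanSpace ℝ (Fin ℓ) → ℝ,
    ContinuousOn ρ (chartAt (EuclideanSpace ℝ (Fin ℓ)) x).target ∧
    (μ.restrict (chartAt (EuclideanSpace ℝ (Fin ℓ)) x).source).map
        (chartAt (EuclideanSpace ℝ (Fin ℓ)) x)
      = (volume.restrict (chartAt (EuclideanSpace ℝ (Fin ℓ)) x).target).withDensity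
          (fun y => ENNReal.ofReal (ρ y))

/-! ### Linear algebra auxiliary lemmas -/

section LinAlgAux

open Module Matrix
open scoped ComplexOrder

lemma aux_det_ne_zero_of_rank_eq {k : ℕ} {V : Matrix (Fin k) (Fin k) ℂ} (h : V.rank = k) :
    V.det ≠ 0 := by
  intro hdet
  obtain ⟨v, hv, hmul⟩ := Matrix.exists_mulVec_eq_zero_iff.2 hdet
  have hrange : LinearMap.range V.mulVecLin = ⊤ := by
    apply Submodule.eq_top_of_finrank_eq
    rw [Module.finrank_fin_fun]
    exact h
  have hinj : Function.Injective V.mulVecLin :=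
    (LinearMap.injective_iff_surjective).2 (LinearMap.range_eq_top.1 hrange)
  exact hv (hinj (by simp [Matrix.mulVecLin_apply, hmul]))

lemma aux_exists_PW {d r : ℕ} (M : Matrix (Fin d) (Fin d) ℂ) (hr : r ≤ M.rank) :
    ∃ (P : Matrix (Fin r) (Fin d) ℂ) (W : Matrix (Fin d) (Fin r) ℂ),
      (P * M * W).det ≠ 0 := by
  obtain ⟨w, hw⟩ := exists_linearIndependent_of_le_finrank
    (R := ℂ) (M := ↥(LinearMap.range M.mulVecLin)) (n := r) hr
  have hv : LinearIndependent ℂ (fun j => ((w j : Fin d → ℂ))) :=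
    hw.map' (LinearMap.range M.mulVecLin).subtype (Submodule.ker_subtype _)
  choose u hu using fun j => LinearMap.mem_range.1 (w j).2
  set W : Matrix (Fin d) (Fin r) ℂ := Matrix.of fun i j => u j i with hWdef
  refine ⟨(M * W)ᴴ, W, ?_⟩
  have hMW : (M * W)ᵀ = Matrix.of fun j i => ((w j : Fin d → ℂ)) i := by
    ext j i
    have h := congrFun (hu j) i
    simp only [Matrix.mulVecLin_apply, Matrix.mulVec, dotProduct] at h
    simp only [Matrix.transpose_apply, Matrix.mul_apply, hWdef, Matrix.of_apply]
    exact h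
  have hrank : (M * W).rank = r := by
    rw [Matrix.rank_eq_finrank_span_cols, show (M * W).col = (M * W)ᵀ from rfl, hMW]
    exact (finrank_span_eq_card hv).trans (Fintype.card_fin r)
  have hfinal : ((M * W)ᴴ * (M * W)).rank = r := by
    rw [Matrix.rank_conjTranspose_mul_self]; exact hrank
  have hassoc : (M * W)ᴴ * M * W = (M * W)ᴴ * (M * W) := by rw [Matrix.mul_assoc]
  rw [hassoc]
  exact aux_det_ne_zero_of_rank_eq hfinal

lemma aux_rank_ge_of_det {d r : ℕ} {M : Matrix (Fin d) (Fin d) ℂ} {P : Matrix (Fin r) (Fin d) ℂ}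
    {W : Matrix (Fin d) (Fin r) ℂ} (h : (P * M * W).det ≠ 0) : r ≤ M.rank := by
  have h1 : (P * M * W).rank = r := by
    rw [Matrix.rank_of_isUnit _ ((Matrix.isUnit_iff_isUnit_det _).2 (isUnit_iff_ne_zero.2 h))]
    exact Fintype.card_fin r
  calc r = (P * M * W).rank := h1.symm
    _ ≤ (P * M).rank := Matrix.rank_mul_le_left _ _
    _ ≤ M.rank := Matrix.rank_mul_le_right _ _

lemma aux_rank_mul_right_eq {d : ℕ} {C D : Matrix (Fin d) (Fin d) ℂ}
    (h : (C * D).rank = C.rank) (B : Matrix (Fin d) (Fin d) ℂ) :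
    (B * (C * D)).rank = (B * C).rank := by
  have hle : LinearMap.range (C * D).mulVecLin ≤ LinearMap.range C.mulVecLin := by
    rw [Matrix.mulVecLin_mul]
    exact LinearMap.range_comp_le_range _ _
  have heq : LinearMap.range (C * D).mulVecLin = LinearMap.range C.mulVecLin :=
    Submodule.eq_of_le_of_finrank_le hle h.ge
  unfold Matrix.rank
  rw [Matrix.mulVecLin_mul B (C * D), Matrix.mulVecLin_mul B C,
    LinearMap.range_comp, LinearMap.range_comp, heq]

end LinAlgAux

/-! ### Cocycle iteration lemmas -/

section CocycleAux

variable {X : Type*} {d : ℕ} (f : X → X) (A : X → Matrix (Fin d) (Fin d) ℂ)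

lemma cocycleIter_zero (x : X) : cocycleIter f A 0 x = 1 := rfl

lemma cocycleIter_succ (k : ℕ) (x : X) :
    cocycleIter f A (k + 1) x = cocycleIter f A k (f x) * A x := rfl

lemma cocycleIter_add (a b : ℕ) (x : X) :
    cocycleIter f A (a + b) x = cocycleIter f A a (f^[b] x) * cocycleIter f A b x := by
  induction b generalizing x with
  | zero => simp [cocycleIter_zero]
  | succ b ih =>
    show cocycleIter f A ((a + b) + 1) x = _
    rw [cocycleIter_succ, ih (f x), cocycleIter_succ, ← Function.iterate_succ_apply, mul_assoc]

variable {f A}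

lemma aux_step {n r : ℕ} (h_le : ∀ x, (cocycleIter f A n x).rank ≤ r) {y : X}
    (hy : (cocycleIter f A (n + 1) y).rank = r) (k : ℕ) :
    (cocycleIter f A (n + 1 + k) y).rank = (cocycleIter f A (n + k) (f y)).rank := by
  have hCD : cocycleIter f A (n + 1) y = cocycleIter f A n (f y) * A y := rfl
  have hC : (cocycleIter f A n (f y)).rank = r := by
    refine le_antisymm (h_le _) ?_
    calc r = (cocycleIter f A (n + 1) y).rank := hy.symm
      _ ≤ _ := by rw [hCD]; exact Matrix.rank_mul_le_left _ _
  have hr' : (cocycleIter f A n (f y) * A y).rank = (cocycleIter f A n (f y)).rank := by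
    rw [← hCD, hy, hC]
  have key := aux_rank_mul_right_eq hr' (cocycleIter f A k (f^[n + 1] y))
  have e1 : cocycleIter f A (n + 1 + k) y
      = cocycleIter f A k (f^[n + 1] y) * (cocycleIter f A n (f y) * A y) := by
    rw [Nat.add_comm (n + 1) k, cocycleIter_add, ← hCD]
  have e2 : cocycleIter f A (n + k) (f y)
      = cocycleIter f A k (f^[n + 1] y) * cocycleIter f A n (f y) := by
    rw [Nat.add_comm n k, cocycleIter_add, ← Function.iterate_succ_apply]
  rw [e1, e2, key]

lemma aux_chain {n r : ℕ} (h_le : ∀ x, (cocycleIter f A n x).rank ≤ r) :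
    ∀ (j : ℕ) (x : X), (∀ k, k ≤ j → (cocycleIter f A (n + 1) (f^[k] x)).rank = r) →
      (cocycleIter f A (n + 1 + j) x).rank = r := by
  intro j
  induction j with
  | zero =>
    intro x hx
    simpa using hx 0 (le_refl 0)
  | succ j ih =>
    intro x hx
    have h0 : (cocycleIter f A (n + 1) x).rank = r := by simpa using hx 0 (Nat.zero_le _)
    have hstep := aux_step h_le h0 (j + 1)
    have hnj : n + (j + 1) = n + 1 + j := by omega
    rw [hstep, hnj]
    refine ih (f x) (fun k hk => ?_)
    have h1 := hx (k + 1) (Nat.succ_le_succ hk)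
    rwa [Function.iterate_succ_apply] at h1

end CocycleAux

/-! ### Analytic-on-manifold auxiliary lemmas -/

section AnalyticAux

variable {ℓ : ℕ} {X : Type*} [TopologicalSpace X]
  [ChartedSpace (EuclideanSpace ℝ (Fin ℓ)) X]
  {F : Type*} [NormedAddCommGroup F] [NormedSpace ℝ F]

lemma AnalyticOnMfd.continuous_self {g : X → F} (hg : AnalyticOnMfd (ℓ := ℓ) g) :
    Continuous g := by
  rw [continuous_iff_continuousAt]
  intro x
  have h1 : ContinuousAt (g ∘ (chartAt (EuclideanSpace ℝ (Fin ℓ)) x).symm)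
      ((chartAt (EuclideanSpace ℝ (Fin ℓ)) x) x) := (hg x).continuousAt
  have h2 : ContinuousAt (chartAt (EuclideanSpace ℝ (Fin ℓ)) x) x :=
    (chartAt (EuclideanSpace ℝ (Fin ℓ)) x).continuousAt (mem_chart_source _ x)
  refine (h1.comp h2).congr ?_
  filter_upwards [(chartAt (EuclideanSpace ℝ (Fin ℓ)) x).open_source.mem_nhds
    (mem_chart_source _ x)] with y hy
  show g ((chartAt (EuclideanSpace ℝ (Fin ℓ)) x).symm
    ((chartAt (EuclideanSpace ℝ (Fin ℓ)) x) y)) = g y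
  rw [(chartAt (EuclideanSpace ℝ (Fin ℓ)) x).left_inv hy]

lemma AnalyticOnMfd.comp_selfMap {g : X → F} (hg : AnalyticOnMfd (ℓ := ℓ) g)
    {f : X → X} (hf : AnalyticSelfMapMfd (ℓ := ℓ) f) :
    AnalyticOnMfd (ℓ := ℓ) (fun x => g (f x)) := by
  intro x
  have hout : AnalyticAt ℝ (g ∘ (chartAt (EuclideanSpace ℝ (Fin ℓ)) (f x)).symm)
      (((chartAt (EuclideanSpace ℝ (Fin ℓ)) (f x)) ∘ f ∘
          (chartAt (EuclideanSpace ℝ (Fin ℓ)) x).symm)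
        ((chartAt (EuclideanSpace ℝ (Fin ℓ)) x) x)) := by
    have hval : (((chartAt (EuclideanSpace ℝ (Fin ℓ)) (f x)) ∘ f ∘
          (chartAt (EuclideanSpace ℝ (Fin ℓ)) x).symm)
        ((chartAt (EuclideanSpace ℝ (Fin ℓ)) x) x))
        = (chartAt (EuclideanSpace ℝ (Fin ℓ)) (f x)) (f x) := by
      show (chartAt (EuclideanSpace ℝ (Fin ℓ)) (f x))
          (f ((chartAt (EuclideanSpace ℝ (Fin ℓ)) x).symm
            ((chartAt (EuclideanSpace ℝ (Fin ℓ)) x) x))) = _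
      rw [(chartAt (EuclideanSpace ℝ (Fin ℓ)) x).left_inv (mem_chart_source _ x)]
    rw [hval]
    exact hg (f x)
  have hcomp := hout.comp (hf.2 x)
  refine hcomp.congr ?_
  have hcont : ContinuousAt (fun y => f ((chartAt (EuclideanSpace ℝ (Fin ℓ)) x).symm y))
      ((chartAt (EuclideanSpace ℝ (Fin ℓ)) x) x) := by
    refine hf.1.continuousAt.comp ?_
    exact (chartAt (EuclideanSpace ℝ (Fin ℓ)) x).continuousAt_symm
      ((chartAt (EuclideanSpace ℝ (Fin ℓ)) x).map_source (mem_chart_source _ x))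
  have hval2 : f ((chartAt (EuclideanSpace ℝ (Fin ℓ)) x).symm
      ((chartAt (EuclideanSpace ℝ (Fin ℓ)) x) x)) = f x := by
    rw [(chartAt (EuclideanSpace ℝ (Fin ℓ)) x).left_inv (mem_chart_source _ x)]
  have hev : ∀ᶠ y in 𝓝 ((chartAt (EuclideanSpace ℝ (Fin ℓ)) x) x),
      f ((chartAt (EuclideanSpace ℝ (Fin ℓ)) x).symm y)
        ∈ (chartAt (EuclideanSpace ℝ (Fin ℓ)) (f x)).source := by
    refine hcont ?_
    beta_reduce
    rw [hval2]
    exact (chartAt (EuclideanSpace ℝ (Fin ℓ)) (f x)).open_source.mem_nhds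
      (mem_chart_source _ (f x))
  filter_upwards [hev] with y hy
  show g ((chartAt (EuclideanSpace ℝ (Fin ℓ)) (f x)).symm
      ((chartAt (EuclideanSpace ℝ (Fin ℓ)) (f x))
        (f ((chartAt (EuclideanSpace ℝ (Fin ℓ)) x).symm y))))
    = g (f ((chartAt (EuclideanSpace ℝ (Fin ℓ)) x).symm y))
  rw [(chartAt (EuclideanSpace ℝ (Fin ℓ)) (f x)).left_inv hy]

lemma AnalyticOnMfd.comp_iterate {g : X → F} (hg : AnalyticOnMfd (ℓ := ℓ) g)
    {f : X → X} (hf : AnalyticSelfMapMfd (ℓ := ℓ) f) (k : ℕ) :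
    AnalyticOnMfd (ℓ := ℓ) (fun x => g (f^[k] x)) := by
  induction k with
  | zero => exact hg
  | succ k ih =>
    have h2 : (fun x => g (f^[k + 1] x)) = (fun x => g (f^[k] (f x))) :=
      funext fun x => by rw [Function.iterate_succ_apply]
    rw [h2]
    exact ih.comp_selfMap hf

lemma analyticOnMfd_const (c : F) : AnalyticOnMfd (ℓ := ℓ) (fun _ : X => c) :=
  fun _ => analyticAt_const

lemma AnalyticOnMfd.mul' {g h : X → ℂ} (hg : AnalyticOnMfd (ℓ := ℓ) g)
    (hh : AnalyticOnMfd (ℓ := ℓ) h) : AnalyticOnMfd (ℓ := ℓ) (fun x => g x * h x) :=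
  fun x => (hg x).mul (hh x)

lemma analyticOnMfd_sum {ι : Type*} (s : Finset ι) {g : ι → X → ℂ}
    (h : ∀ i ∈ s, AnalyticOnMfd (ℓ := ℓ) (g i)) :
    AnalyticOnMfd (ℓ := ℓ) (fun x => ∑ i ∈ s, g i x) :=
  fun x => Finset.analyticAt_fun_sum s (fun i hi => h i hi x)

lemma analyticOnMfd_prod {ι : Type*} (s : Finset ι) {g : ι → X → ℂ}
    (h : ∀ i ∈ s, AnalyticOnMfd (ℓ := ℓ) (g i)) :
    AnalyticOnMfd (ℓ := ℓ) (fun x => ∏ i ∈ s, g i x) :=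
  fun x => Finset.analyticAt_fun_prod s (fun i hi => h i hi x)

lemma analyticOnMfd_cocycleIter {d : ℕ} {f : X → X} {A : X → Matrix (Fin d) (Fin d) ℂ}
    (hf : AnalyticSelfMapMfd (ℓ := ℓ) f)
    (hA : ∀ i j : Fin d, AnalyticOnMfd (ℓ := ℓ) (fun x => A x i j)) :
    ∀ (k : ℕ) (i j : Fin d), AnalyticOnMfd (ℓ := ℓ) (fun x => cocycleIter f A k x i j) := by
  intro k
  induction k with
  | zero =>
    intro i j
    exact analyticOnMfd_const ((1 : Matrix (Fin d) (Fin d) ℂ) i j)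
  | succ k ih =>
    intro i j
    have h2 : (fun x => cocycleIter f A (k + 1) x i j)
        = fun x => ∑ l, cocycleIter f A k (f x) i l * A x l j := by
      funext x; rw [cocycleIter_succ, Matrix.mul_apply]
    rw [h2]
    refine analyticOnMfd_sum Finset.univ (fun l _ => ?_)
    exact AnalyticOnMfd.mul' ((ih i l).comp_selfMap hf) (hA l j)

lemma analyticOnMfd_det_PMW {d r : ℕ} {f : X → X} {A : X → Matrix (Fin d) (Fin d) ℂ}
    (hf : AnalyticSelfMapMfd (ℓ := ℓ) f)
    (hA : ∀ i j : Fin d, AnalyticOnMfd (ℓ := ℓ) (fun x => A x i j)) (N : ℕ)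
    (P : Matrix (Fin r) (Fin d) ℂ) (W : Matrix (Fin d) (Fin r) ℂ) :
    AnalyticOnMfd (ℓ := ℓ) (fun x => (P * cocycleIter f A N x * W).det) := by
  have hent : ∀ a b : Fin r, AnalyticOnMfd (ℓ := ℓ)
      (fun x => (P * cocycleIter f A N x * W) a b) := by
    intro a b
    have h2 : (fun x => (P * cocycleIter f A N x * W) a b)
        = fun x => ∑ jj, (∑ ii, P a ii * cocycleIter f A N x ii jj) * W jj b := by
      funext x; simp only [Matrix.mul_apply]
    rw [h2]
    refine analyticOnMfd_sum Finset.univ (fun jj _ => ?_)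
    refine AnalyticOnMfd.mul' ?_ (analyticOnMfd_const _)
    refine analyticOnMfd_sum Finset.univ (fun ii _ => ?_)
    exact AnalyticOnMfd.mul' (analyticOnMfd_const _) (analyticOnMfd_cocycleIter hf hA N ii jj)
  have h3 : (fun x => (P * cocycleIter f A N x * W).det)
      = fun x => ∑ σ : Equiv.Perm (Fin r), ((Equiv.Perm.sign σ : ℤ) : ℂ)
          * ∏ i, (P * cocycleIter f A N x * W) (σ i) i := by
    funext x; rw [Matrix.det_apply']
  rw [h3]
  refine analyticOnMfd_sum Finset.univ (fun σ _ => ?_)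
  refine AnalyticOnMfd.mul' (analyticOnMfd_const _) ?_
  exact analyticOnMfd_prod Finset.univ (fun i _ => hent (σ i) i)

end AnalyticAux

section DenseAux

variable {ℓ : ℕ} {X : Type*} [TopologicalSpace X]
  [ChartedSpace (EuclideanSpace ℝ (Fin ℓ)) X]
  {F : Type*} [NormedAddCommGroup F] [NormedSpace ℝ F]

lemma AnalyticOnMfd.dense_ne_zero [ConnectedSpace X] [CompleteSpace F] {g : X → F}
    (hg : AnalyticOnMfd (ℓ := ℓ) g) (hne : ∃ x, g x ≠ 0) :
    Dense {x : X | g x ≠ 0} := by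
  set S : Set X := {x : X | ∀ᶠ y in 𝓝 x, g y = 0} with hS
  have hSopen : IsOpen S := isOpen_setOf_eventually_nhds
  have hSclosed : IsClosed S := by
    refine isClosed_of_closure_subset ?_
    intro x hx
    set e := chartAt (EuclideanSpace ℝ (Fin ℓ)) x with he
    obtain ⟨ra, hra, hana⟩ := (hg x).exists_ball_analyticOnNhd
    obtain ⟨rt, hrt, hsub⟩ := Metric.isOpen_iff.1 e.open_target (e x)
      (e.map_source (mem_chart_source _ x))
    set rr := min ra rt with hrr
    have hrr0 : 0 < rr := lt_min hra hrt
    set B := Metric.ball (e x) rr with hB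
    have hBa : AnalyticOnNhd ℝ (g ∘ e.symm) B :=
      hana.mono (Metric.ball_subset_ball (min_le_left _ _))
    have hU' : IsOpen (e.source ∩ e ⁻¹' B) :=
      e.continuousOn.isOpen_inter_preimage e.open_source Metric.isOpen_ball
    have hxU' : x ∈ e.source ∩ e ⁻¹' B :=
      ⟨mem_chart_source _ x, Metric.mem_ball_self hrr0⟩
    obtain ⟨s, hsU', hsS⟩ := _root_.mem_closure_iff.1 hx _ hU' hxU'
    have hsS' : ∀ᶠ y in 𝓝 s, g y = 0 := hsS
    have ht : Filter.Tendsto e.symm (𝓝 (e s)) (𝓝 s) := by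
      have h0 := (e.continuousAt_symm (e.map_source hsU'.1)).tendsto
      rwa [e.left_inv hsU'.1] at h0
    have hzero : (g ∘ e.symm) =ᶠ[𝓝 (e s)] 0 :=
      (ht.eventually hsS').mono (fun z hz => hz)
    have hEq : Set.EqOn (g ∘ e.symm) 0 B :=
      hBa.eqOn_zero_of_preconnected_of_eventuallyEq_zero
        (convex_ball (e x) rr).isPreconnected hsU'.2 hzero
    show ∀ᶠ y in 𝓝 x, g y = 0
    filter_upwards [hU'.mem_nhds hxU'] with y hy
    have h1 : g y = (g ∘ e.symm) (e y) := by
      show g y = g (e.symm (e y))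
      rw [e.left_inv hy.1]
    rw [h1]
    exact hEq hy.2
  have hSempty : S = ∅ := by
    rcases (isClopen_iff.1 ⟨hSclosed, hSopen⟩) with h | h
    · exact h
    · exfalso
      obtain ⟨x₀, hx₀⟩ := hne
      have hx₀S : x₀ ∈ S := h ▸ Set.mem_univ x₀
      exact hx₀ (hx₀S.self_of_nhds)
  rw [dense_iff_inter_open]
  rintro U hUo ⟨u, hu⟩
  by_contra hempty
  have hz : ∀ y ∈ U, g y = 0 := by
    intro y hy
    by_contra hgy
    exact hempty ⟨y, hy, hgy⟩
  have huS : u ∈ S := Filter.eventually_of_mem (hUo.mem_nhds hu) hz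
  rw [hSempty] at huS
  exact huS

end DenseAux

section MeasureAux

lemma dense_open_measure_ne_zero {ℓ : ℕ} {X : Type*} [TopologicalSpace X] [T2Space X]
    [CompactSpace X] [ChartedSpace (EuclideanSpace ℝ (Fin ℓ)) X]
    [MeasurableSpace X] [BorelSpace X]
    (μ : Measure X) [IsProbabilityMeasure μ] (hμ : HasContinuousChartDensity (ℓ := ℓ) μ)
    {U : Set X} (hUo : IsOpen U) (hUd : Dense U) : μ U ≠ 0 := by
  intro h0
  have key : ∀ c : X, μ (chartAt (EuclideanSpace ℝ (Fin ℓ)) c).source = 0 := by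
    intro c
    set e := chartAt (EuclideanSpace ℝ (Fin ℓ)) c with he
    obtain ⟨ρ, hρc, hρ⟩ := hμ c
    have hae : AEMeasurable e (μ.restrict e.source) :=
      e.continuousOn.aemeasurable e.open_source.measurableSet
    set V : Set (EuclideanSpace ℝ (Fin ℓ)) := e.target ∩ e.symm ⁻¹' U with hV
    have hVo : IsOpen V := e.continuousOn_symm.isOpen_inter_preimage e.open_target hUo
    have hVsub : V ⊆ e.target := Set.inter_subset_left
    have hVd : ∀ W : Set (EuclideanSpace ℝ (Fin ℓ)), IsOpen W → W ⊆ e.target → W.Nonempty →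
        (W ∩ V).Nonempty := by
      rintro W hWo hWt ⟨w, hw⟩
      have hsrc : IsOpen (e.source ∩ e ⁻¹' W) :=
        e.continuousOn.isOpen_inter_preimage e.open_source hWo
      have hne : (e.source ∩ e ⁻¹' W).Nonempty := by
        refine ⟨e.symm w, e.map_target (hWt hw), ?_⟩
        rw [Set.mem_preimage, e.right_inv (hWt hw)]
        exact hw
      obtain ⟨z, hz2, hzU⟩ := hUd.inter_open_nonempty _ hsrc hne
      refine ⟨e z, hz2.2, e.map_source hz2.1, ?_⟩
      rw [Set.mem_preimage, e.left_inv hz2.1]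
      exact hzU
    have hκV : ∫⁻ y in V, ENNReal.ofReal (ρ y) ∂(volume.restrict e.target) = 0 := by
      have h1 : ((μ.restrict e.source).map e) V = 0 := by
        rw [Measure.map_apply_of_aemeasurable hae hVo.measurableSet,
          Measure.restrict_apply' e.open_source.measurableSet]
        refine measure_mono_null ?_ h0
        rintro y ⟨hyV, hys⟩
        have h2 := hyV.2
        rwa [Set.mem_preimage, e.left_inv hys] at h2
      rw [hρ] at h1
      rwa [withDensity_apply _ hVo.measurableSet] at h1
    have hρle : ∀ y ∈ e.target, ρ y ≤ 0 := by
      by_contra hcon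
      push_neg at hcon
      obtain ⟨y, hyt, hy0⟩ := hcon
      have hcy : ContinuousAt ρ y := hρc.continuousAt (e.open_target.mem_nhds hyt)
      have hev : ρ ⁻¹' Set.Ioi (ρ y / 2) ∈ 𝓝 y := hcy (Ioi_mem_nhds (by linarith))
      obtain ⟨N, hNsub, hNo, hyN⟩ := mem_nhds_iff.1 hev
      have hWo : IsOpen (N ∩ e.target) := hNo.inter e.open_target
      obtain ⟨z0, hz0⟩ : ((N ∩ e.target) ∩ V).Nonempty :=
        hVd _ hWo Set.inter_subset_right ⟨y, hyN, hyt⟩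
      set S0 := (N ∩ e.target) ∩ V with hS0
      have hS0o : IsOpen S0 := hWo.inter hVo
      have hvolpos : 0 < volume S0 := hS0o.measure_pos _ ⟨z0, hz0⟩
      have hlow : ENNReal.ofReal (ρ y / 2) * volume S0
          ≤ ∫⁻ z in V, ENNReal.ofReal (ρ z) ∂(volume.restrict e.target) := by
        calc ENNReal.ofReal (ρ y / 2) * volume S0
            = ∫⁻ _ in S0, ENNReal.ofReal (ρ y / 2) ∂volume := (setLIntegral_const _ _).symm
          _ ≤ ∫⁻ z in S0, ENNReal.ofReal (ρ z) ∂volume := by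
              refine lintegral_mono_ae ?_
              refine (ae_restrict_iff' hS0o.measurableSet).2 (Filter.Eventually.of_forall ?_)
              intro z hz
              have hzN : z ∈ N := hz.1.1
              have := hNsub hzN
              exact ENNReal.ofReal_le_ofReal (le_of_lt this)
          _ ≤ ∫⁻ z in V, ENNReal.ofReal (ρ z) ∂(volume.restrict e.target) := by
              rw [Measure.restrict_restrict hVo.measurableSet,
                Set.inter_eq_self_of_subset_left hVsub]
              exact lintegral_mono' (Measure.restrict_mono Set.inter_subset_right le_rfl) le_rfl
      rw [hκV] at hlow
      have hz : ENNReal.ofReal (ρ y / 2) * volume S0 = 0 := le_antisymm hlow zero_le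
      rcases mul_eq_zero.1 hz with h | h
      · rw [ENNReal.ofReal_eq_zero] at h; linarith
      · exact absurd h hvolpos.ne'
    have h2 : ((μ.restrict e.source).map e) e.target = μ e.source := by
      rw [Measure.map_apply_of_aemeasurable hae e.open_target.measurableSet,
        Measure.restrict_apply' e.open_source.measurableSet]
      congr 1
      ext y
      constructor
      · rintro ⟨_, hy⟩; exact hy
      · intro hy; exact ⟨e.map_source hy, hy⟩
    have h3 : ((μ.restrict e.source).map e) e.target = 0 := by
      rw [hρ, withDensity_apply _ e.open_target.measurableSet]
      have hz : ∀ᵐ y ∂((volume.restrict e.target).restrict e.target),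
          ENNReal.ofReal (ρ y) = 0 := by
        refine (ae_restrict_iff' e.open_target.measurableSet).2 (Filter.Eventually.of_forall ?_)
        intro y hy
        exact ENNReal.ofReal_eq_zero.2 (hρle y hy)
      rw [lintegral_congr_ae hz, lintegral_zero]
    rw [← h2]
    exact h3
  obtain ⟨t, ht⟩ := isCompact_univ.elim_finite_subcover
    (fun c : X => (chartAt (EuclideanSpace ℝ (Fin ℓ)) c).source)
    (fun c => (chartAt _ c).open_source)
    (fun y _ => Set.mem_iUnion.2 ⟨y, mem_chart_source _ y⟩)
  have huniv : μ Set.univ = 0 := by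
    refine le_antisymm ?_ zero_le
    calc μ Set.univ ≤ μ (⋃ c ∈ t, (chartAt (EuclideanSpace ℝ (Fin ℓ)) c).source) :=
          measure_mono ht
      _ ≤ ∑ c ∈ t, μ (chartAt (EuclideanSpace ℝ (Fin ℓ)) c).source :=
          measure_biUnion_finset_le _ _
      _ = 0 := by simp [key]
  rw [measure_univ] at huniv
  exact one_ne_zero huniv

end MeasureAux

/-- For an analytic cocycle `(f, A)` over a compact connected measure space
`(X, μ)`: if for some `n ≥ 1`, `m > 0` and `r` one has `rank A_n(x) ≤ r` for all `x` and
`rank A_{n+m}(x) < r` for all `x`, then already `rank A_{n+1}(x) < r` for all `x`. -/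
theorem stmt_9 {ℓ d : ℕ} {X : Type*} [TopologicalSpace X] [T2Space X] [CompactSpace X]
    [ConnectedSpace X] [ChartedSpace (EuclideanSpace ℝ (Fin ℓ)) X]
    [IsManifold (modelWithCornersSelf ℝ (EuclideanSpace ℝ (Fin ℓ))) (⊤ : WithTop ℕ∞) X]
    [MeasurableSpace X] [BorelSpace X]
    (μ : Measure X) [IsProbabilityMeasure μ]
    (hμ : HasContinuousChartDensity (ℓ := ℓ) μ)
    (f : X → X) (hf : AnalyticSelfMapMfd (ℓ := ℓ) f) (hf_mp : MeasurePreserving f μ μ)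
    (A : X → Matrix (Fin d) (Fin d) ℂ)
    (hA : ∀ i j : Fin d, AnalyticOnMfd (ℓ := ℓ) (fun x => A x i j))
    (n m r : ℕ) (hn : 1 ≤ n) (hm : 0 < m)
    (h_le : ∀ x : X, (cocycleIter f A n x).rank ≤ r)
    (h_lt : ∀ x : X, (cocycleIter f A (n + m) x).rank < r) :
    ∀ x : X, (cocycleIter f A (n + 1) x).rank < r := by
  by_contra hcon
  push_neg at hcon
  obtain ⟨x₀, hx₀⟩ := hcon
  obtain ⟨P, W, hPW⟩ := aux_exists_PW (cocycleIter f A (n + 1) x₀) hx₀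
  set g : X → ℂ := fun x => (P * cocycleIter f A (n + 1) x * W).det with hgdef
  have hgma : AnalyticOnMfd (ℓ := ℓ) g := analyticOnMfd_det_PMW hf hA (n + 1) P W
  have hgcont : Continuous g := hgma.continuous_self
  have hrank_eq : ∀ x : X, g x ≠ 0 → (cocycleIter f A (n + 1) x).rank = r := by
    intro x hx
    refine le_antisymm ?_ (aux_rank_ge_of_det hx)
    calc (cocycleIter f A (n + 1) x).rank
        = (cocycleIter f A n (f x) * A x).rank := by rw [cocycleIter_succ]
      _ ≤ (cocycleIter f A n (f x)).rank := Matrix.rank_mul_le_left _ _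
      _ ≤ r := h_le _
  set U : Set X := {x | g x ≠ 0} with hUdef
  have hUo : IsOpen U := by
    have h1 : U = {x | g x = 0}ᶜ := by ext z; simp [hUdef]
    rw [h1]
    exact (isClosed_eq hgcont continuous_const).isOpen_compl
  have hUd : Dense U := hgma.dense_ne_zero ⟨x₀, hPW⟩
  have hmeas : MeasurableSet U := hUo.measurableSet
  have hdense_pre : ∀ k : ℕ, Dense (f^[k] ⁻¹' U) := by
    intro k
    have hgk : AnalyticOnMfd (ℓ := ℓ) (fun x => g (f^[k] x)) := hgma.comp_iterate hf k
    by_cases hek : ∃ x, g (f^[k] x) ≠ 0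
    · have hd := hgk.dense_ne_zero hek
      have hEq : {x : X | g (f^[k] x) ≠ 0} = f^[k] ⁻¹' U := rfl
      rwa [hEq] at hd
    · exfalso
      push_neg at hek
      have hpre : f^[k] ⁻¹' U = ∅ := by
        ext z
        simp [hUdef, hek z]
      have hμU : μ U = 0 := by
        rw [← (hf_mp.iterate k).measure_preimage hmeas.nullMeasurableSet, hpre]
        exact measure_empty
      exact dense_open_measure_ne_zero μ hμ hUo hUd hμU
  have hinter : ∀ j : ℕ, Dense (⋂ k ∈ Finset.range j, f^[k] ⁻¹' U) := by
    intro j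
    induction j with
    | zero => simpa using dense_univ
    | succ j ih =>
      rw [Finset.range_add_one, Finset.set_biInter_insert]
      exact Dense.inter_of_isOpen_left (hdense_pre j) ih (hUo.preimage (hf.1.iterate j))
  obtain ⟨m', rfl⟩ : ∃ m', m = m' + 1 := ⟨m - 1, by omega⟩
  obtain ⟨x, hx⟩ := (hinter (m' + 1)).nonempty
  have hranks : ∀ k, k ≤ m' → (cocycleIter f A (n + 1) (f^[k] x)).rank = r := by
    intro k hk
    have hxk : f^[k] x ∈ U :=
      Set.mem_iInter₂.1 hx k (Finset.mem_range.2 (by omega))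
    exact hrank_eq _ hxk
  have hfinal := aux_chain h_le m' x hranks
  have hlt := h_lt x
  rw [show n + (m' + 1) = n + 1 + m' from by omega] at hlt
  rw [hfinal] at hlt
  exact lt_irrefl r hlt
end

section
/- Let φ : ℝ → ℂ^d be real analytic, 1-periodic and not identically zero. Then there exist a real analytic 1-periodic map ψ : ℝ → ℂ^d with ‖ψ(x)‖ = 1 for all x and a real analytic 1-periodic function c : ℝ → ℂ such that φ(x) = c(x)ψ(x) for all x; in particular, for every x the vector φ(x) is a complex scalar multiple of the unit vector ψ(x). -/
open MeasureTheory Filter Topology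

noncomputable section
namespace Stmt10
open Complex

lemma analyticAt_conj {f : ℝ → ℂ} {x : ℝ} (hf : AnalyticAt ℝ f x) :
    AnalyticAt ℝ (fun t => (starRingEnd ℂ) (f t)) x := by
  have := (Complex.conjCLE.toContinuousLinearMap.analyticAt (f x)).comp hf
  exact this

lemma analyticAt_normSq {f : ℝ → ℂ} {x : ℝ} (hf : AnalyticAt ℝ f x) :
    AnalyticAt ℝ (fun t => Complex.normSq (f t)) x := by
  have h : (fun t => Complex.normSq (f t)) = fun t => (f t * (starRingEnd ℂ) (f t)).re := by
    funext t; rw [Complex.mul_conj]; simp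
  rw [h]
  exact (Complex.reCLM.analyticAt _).comp (hf.mul (analyticAt_conj hf))

lemma analyticAt_ofReal {u : ℝ → ℝ} {x : ℝ} (hu : AnalyticAt ℝ u x) :
    AnalyticAt ℝ (fun t => ((u t : ℝ) : ℂ)) x :=
  (Complex.ofRealCLM.analyticAt _).comp hu

lemma analyticAt_cexp {f : ℝ → ℂ} {x : ℝ} (hf : AnalyticAt ℝ f x) :
    AnalyticAt ℝ (fun t => Complex.exp (f t)) x :=
  ((Complex.differentiable_exp.analyticAt (f x)).restrictScalars).comp hf

/-- analytic square root (as modulus) of a positive analytic function -/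
lemma analyticAt_sqrtc {u : ℝ → ℝ} {x : ℝ} (hu : AnalyticAt ℝ u x) (hx : 0 < u x) :
    AnalyticAt ℝ (fun t => Complex.exp (Complex.log ((u t : ℝ) : ℂ) / 2)) x := by
  have h0 : AnalyticAt ℝ (fun t => ((u t : ℝ) : ℂ)) x := analyticAt_ofReal hu
  have hlog : AnalyticAt ℝ (Complex.log) (((u x : ℝ) : ℂ)) :=
    (_root_.analyticAt_clog (Complex.ofReal_mem_slitPlane.2 hx)).restrictScalars
  have h1 : AnalyticAt ℝ (fun t => Complex.log ((u t : ℝ) : ℂ)) x := AnalyticAt.comp (f := fun t : ℝ => ((u t : ℝ) : ℂ)) hlog h0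
  exact analyticAt_cexp (h1.div analyticAt_const (by norm_num))

lemma normSq_sqrtc {r : ℝ} (hr : 0 < r) :
    Complex.normSq (Complex.exp (Complex.log ((r : ℝ) : ℂ) / 2)) = r := by
  rw [← Complex.ofReal_log hr.le]
  have : ((Real.log r : ℝ) : ℂ) / 2 = ((Real.log r / 2 : ℝ) : ℂ) := by push_cast; ring
  rw [this, Complex.normSq_eq_norm_sq, Complex.norm_exp]
  simp only [Complex.ofReal_re]
  rw [sq, ← Real.exp_add]
  rw [show Real.log r / 2 + Real.log r / 2 = Real.log r by ring, Real.exp_log hr]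

lemma analyticAt_coe_sub_pow (x₀ : ℝ) (m : ℕ) (x : ℝ) :
    AnalyticAt ℝ (fun t : ℝ => ((t - x₀ : ℝ) : ℂ) ^ m) x := by
  apply AnalyticAt.pow
  exact (Complex.ofRealCLM.analyticAt _).comp ((analyticAt_id).sub analyticAt_const)

lemma order_factor {f : ℝ → ℂ} {x₀ : ℝ} (hf : AnalyticAt ℝ f x₀) {k : ℕ}
    (hk : (k : ℕ∞) ≤ analyticOrderAt f x₀) :
    ∃ ρ : ℝ → ℂ, AnalyticAt ℝ ρ x₀ ∧ (analyticOrderAt f x₀ = (k : ℕ∞) → ρ x₀ ≠ 0) ∧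
      ∀ᶠ t in 𝓝 x₀, f t = ((t - x₀ : ℝ) : ℂ) ^ k * ρ t := by
  rcases eq_or_ne (analyticOrderAt f x₀) ⊤ with h | h
  · refine ⟨0, analyticAt_const, ?_, ?_⟩
    · intro h'; rw [h'] at h; exact absurd h (by simp)
    · filter_upwards [analyticOrderAt_eq_top.mp h] with t ht
      simp [ht]
  · lift analyticOrderAt f x₀ to ℕ using h with n hn
    obtain ⟨b, hb, hbne, heq⟩ := hf.analyticOrderAt_eq_natCast.mp hn.symm
    have hkn : k ≤ n := by exact_mod_cast hk
    refine ⟨fun t => ((t - x₀ : ℝ) : ℂ) ^ (n - k) * b t, ?_, ?_, ?_⟩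
    · exact (analyticAt_coe_sub_pow x₀ (n - k) x₀).mul hb
    · intro h'
      have hnk : n = k := by exact_mod_cast h'
      subst hnk
      simpa using hbne
    · filter_upwards [heq] with t ht
      rw [ht, ← mul_assoc, ← pow_add, Nat.add_sub_cancel' hkn]
      rw [Complex.real_smul, Complex.ofReal_pow]

lemma exp_factor (x₀ : ℝ) :
    ∃ a : ℝ → ℂ, AnalyticAt ℝ a x₀ ∧ a x₀ ≠ 0 ∧
      ∀ᶠ t : ℝ in 𝓝 x₀, Complex.exp (2 * Real.pi * Complex.I * t) -
        Complex.exp (2 * Real.pi * Complex.I * x₀) = ((t - x₀ : ℝ) : ℂ) * a t := by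
  set w : ℂ := Complex.exp (2 * Real.pi * Complex.I * x₀) with hw
  set f : ℝ → ℂ := fun t => Complex.exp (2 * Real.pi * Complex.I * t) - w with hfdef
  have hfa : AnalyticAt ℝ f x₀ := by
    apply AnalyticAt.sub _ analyticAt_const
    exact (((Complex.differentiable_exp.analyticAt _).restrictScalars).comp
      ((analyticAt_const (v := (2 * Real.pi * Complex.I : ℂ))).mul
        ((Complex.ofRealCLM.analyticAt _).comp analyticAt_id)))
  have hc : (2 * (Real.pi : ℂ) * Complex.I) ≠ 0 := by
    simp [Real.pi_ne_zero, Complex.I_ne_zero, Complex.ofReal_ne_zero]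
  have hder : HasDerivAt f (Complex.exp (2 * Real.pi * Complex.I * x₀) *
      (2 * Real.pi * Complex.I)) x₀ := by
    have h1 : HasDerivAt (fun z : ℂ => Complex.exp (2 * Real.pi * Complex.I * z) - w)
        (Complex.exp (2 * Real.pi * Complex.I * (x₀ : ℂ)) * (2 * Real.pi * Complex.I * 1))
        (x₀ : ℂ) := (((hasDerivAt_id (x₀ : ℂ)).const_mul _).cexp).sub_const w
    have := h1.comp_ofReal
    simpa [hfdef] using this
  have hdne : Complex.exp (2 * Real.pi * Complex.I * x₀) * (2 * Real.pi * Complex.I) ≠ 0 :=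
    mul_ne_zero (Complex.exp_ne_zero _) hc
  have hf0 : f x₀ = 0 := by simp [hfdef, hw]
  -- order is not ⊤
  have hnt : analyticOrderAt f x₀ ≠ ⊤ := by
    intro h
    have h0 : HasDerivAt f 0 x₀ :=
      (hasDerivAt_const x₀ (0 : ℂ)).congr_of_eventuallyEq (analyticOrderAt_eq_top.mp h)
    exact hdne (hder.unique h0)
  lift analyticOrderAt f x₀ to ℕ using hnt with n hn
  -- n ≠ 0
  obtain ⟨b, hb, hbne, heq⟩ := hfa.analyticOrderAt_eq_natCast.mp hn.symm
  have hn0 : n ≠ 0 := by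
    rintro rfl
    apply hbne
    have := heq.self_of_nhds
    simpa [hf0] using this.symm
  have hn1 : n = 1 := by
    by_contra hne
    have hn2 : 2 ≤ n := by omega
    -- derivative of RHS is 0
    have hpow : HasDerivAt (fun t : ℝ => (t - x₀) ^ n)
        ((n : ℝ) * (x₀ - x₀) ^ (n - 1) * 1) x₀ := ((hasDerivAt_id x₀).sub_const x₀).pow n
    have hbd : HasDerivAt b (deriv b x₀) x₀ := hb.differentiableAt.hasDerivAt
    have hrhs : HasDerivAt (fun t : ℝ => (t - x₀) ^ n • b t)
        ((x₀ - x₀) ^ n • deriv b x₀ + ((n : ℝ) * (x₀ - x₀) ^ (n - 1) * 1) • b x₀) x₀ :=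
      HasDerivAt.smul hpow hbd
    have hval : ((x₀ - x₀) ^ n • deriv b x₀ + ((n : ℝ) * (x₀ - x₀) ^ (n - 1) * 1) • b x₀) = 0 := by
      have h1 : (x₀ - x₀ : ℝ) = 0 := sub_self x₀
      rw [h1, zero_pow hn0, zero_pow (by omega : n - 1 ≠ 0)]
      simp
    rw [hval] at hrhs
    have h0 : HasDerivAt f 0 x₀ := hrhs.congr_of_eventuallyEq heq
    exact hdne (hder.unique h0)
  subst hn1
  refine ⟨b, hb, hbne, ?_⟩
  filter_upwards [heq] with t ht
  show f t = _
  rw [ht, pow_one, Complex.real_smul]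

lemma loc_fact {d : ℕ} (φ : ℝ → Fin d → ℂ) (z₀ : ℝ) [NeZero d]
    (hφ_an : ∀ i, AnalyticAt ℝ (fun t => φ t i) z₀)
    (hz : φ z₀ = 0)
    (hne : ¬ ∀ᶠ t in 𝓝 z₀, ∀ i, φ t i = 0) :
    ∃ (k : ℕ) (ρ : ℝ → Fin d → ℂ),
      (k : ℕ∞) = ⨅ i, analyticOrderAt (fun t => φ t i) z₀ ∧ 1 ≤ k ∧
      (∀ i, AnalyticAt ℝ (fun t => ρ t i) z₀) ∧
      (∀ᶠ t in 𝓝 z₀, ∀ i, φ t i = ((t - z₀ : ℝ) : ℂ) ^ k * ρ t i) ∧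
      0 < ∑ i, Complex.normSq (ρ z₀ i) := by
  classical
  have hnt : (⨅ i, analyticOrderAt (fun t => φ t i) z₀) ≠ ⊤ := by
    intro h
    rw [iInf_eq_top] at h
    apply hne
    have h' : ∀ i, ∀ᶠ t in 𝓝 z₀, φ t i = 0 :=
      fun i => analyticOrderAt_eq_top.mp (h i)
    exact eventually_all.mpr h'
  set k : ℕ := (⨅ i, analyticOrderAt (fun t => φ t i) z₀).toNat with hkdef
  have hk : (k : ℕ∞) = ⨅ i, analyticOrderAt (fun t => φ t i) z₀ := ENat.coe_toNat hnt
  -- minimizer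
  obtain ⟨i₀, -, hmin⟩ := Finset.exists_min_image (Finset.univ : Finset (Fin d))
    (fun i => analyticOrderAt (fun t => φ t i) z₀) ⟨Classical.arbitrary (Fin d), Finset.mem_univ _⟩
  have hi₀ : analyticOrderAt (fun t => φ t i₀) z₀ = (k : ℕ∞) := by
    rw [hk]
    exact le_antisymm (le_iInf fun j => hmin j (Finset.mem_univ j)) (iInf_le _ i₀)
  have hle : ∀ i, (k : ℕ∞) ≤ analyticOrderAt (fun t => φ t i) z₀ := fun i => hk ▸ iInf_le _ i
  have hchoice : ∀ i, ∃ ρi : ℝ → ℂ, AnalyticAt ℝ ρi z₀ ∧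
      (analyticOrderAt (fun t => φ t i) z₀ = (k : ℕ∞) → ρi z₀ ≠ 0) ∧
      ∀ᶠ t in 𝓝 z₀, φ t i = ((t - z₀ : ℝ) : ℂ) ^ k * ρi t :=
    fun i => order_factor (hφ_an i) (hle i)
  choose ρ hρ_an hρ_ne hρ_eq using hchoice
  have hkk1 : 1 ≤ k := by
    by_contra h
    have hk0 : k = 0 := by omega
    have h0 : φ z₀ i₀ = ((z₀ - z₀ : ℝ) : ℂ) ^ k * ρ i₀ z₀ := (hρ_eq i₀).self_of_nhds
    rw [hk0] at h0
    simp only [pow_zero, one_mul] at h0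
    have := hρ_ne i₀ hi₀
    rw [← h0] at this
    exact this (by rw [hz]; rfl)
  refine ⟨k, fun t i => ρ i t, hk, hkk1, hρ_an, ?_, ?_⟩
  · exact eventually_all.mpr hρ_eq
  · apply Finset.sum_pos' (fun i _ => Complex.normSq_nonneg _)
    exact ⟨i₀, Finset.mem_univ _, by
      simpa [Complex.normSq_pos] using hρ_ne i₀ hi₀⟩



end Stmt10

open Stmt10 in
/-- A real analytic, 1-periodic, not identically vanishing map
`φ : ℝ → ℂ^d` can be written as `φ(x) = c(x) ψ(x)` with `c` a real analytic 1-periodic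
scalar function and `ψ` a real analytic 1-periodic map of unit vectors (Hermitian norm). -/
theorem stmt_10 {d : ℕ} (φ : ℝ → Fin d → ℂ)
    (hφ_per : Function.Periodic φ 1)
    (hφ_an : ∀ (x : ℝ) (i : Fin d), AnalyticAt ℝ (fun t => φ t i) x)
    (hφ_ne : ∃ x : ℝ, φ x ≠ 0) :
    ∃ (ψ : ℝ → Fin d → ℂ) (c : ℝ → ℂ),
      Function.Periodic ψ 1 ∧
      (∀ (x : ℝ) (i : Fin d), AnalyticAt ℝ (fun t => ψ t i) x) ∧
      Function.Periodic c 1 ∧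
      (∀ x : ℝ, AnalyticAt ℝ c x) ∧
      (∀ x : ℝ, ∑ i, ‖ψ x i‖ ^ 2 = 1) ∧
      (∀ (x : ℝ) (i : Fin d), φ x i = c x * ψ x i) := by
  classical
  haveI hd0 : NeZero d := ⟨by
    rintro rfl
    obtain ⟨x, hx⟩ := hφ_ne
    exact hx (funext fun i => i.elim0)⟩
  have hφ_int : ∀ (x : ℝ) (n : ℤ), φ (x + n) = φ x := by
    intro x n
    simpa using (hφ_per.int_mul n) x
  -- the exponential
  set e : ℝ → ℂ := fun x => Complex.exp (2 * Real.pi * Complex.I * x) with hedef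
  have he_an : ∀ x, AnalyticAt ℝ e x := fun x =>
    analyticAt_cexp (analyticAt_const.mul (analyticAt_ofReal analyticAt_id))
  have he_int : ∀ (x : ℝ) (n : ℤ), e (x + n) = e x := by
    intro x n
    simp only [hedef]
    rw [show 2 * (Real.pi : ℂ) * Complex.I * ((x + n : ℝ) : ℂ)
        = 2 * Real.pi * Complex.I * x + n * (2 * Real.pi * Complex.I) by push_cast; ring]
    rw [Complex.exp_add, Complex.exp_int_mul_two_pi_mul_I, mul_one]
  have he_per : ∀ x : ℝ, e (x + 1) = e x := by
    intro x
    simpa using he_int x 1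
  have h2πI : (2 * (Real.pi : ℂ) * Complex.I) ≠ 0 := by
    simp [Real.pi_ne_zero, Complex.I_ne_zero, Complex.ofReal_ne_zero]
  have he_eq : ∀ x y : ℝ, e x = e y → ∃ n : ℤ, x = y + n := by
    intro x y h
    simp only [hedef] at h
    rw [Complex.exp_eq_exp_iff_exists_int] at h
    obtain ⟨n, hn⟩ := h
    refine ⟨n, ?_⟩
    have hC : ((x : ℂ)) = ((y + n : ℝ) : ℂ) := by
      apply mul_left_cancel₀ h2πI
      push_cast
      push_cast at hn
      linear_combination hn
    exact_mod_cast hC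
  -- the norm-square function
  set g : ℝ → ℝ := fun x => ∑ i, Complex.normSq (φ x i) with hgdef
  have hg_an : ∀ x, AnalyticAt ℝ g x := fun x =>
    Finset.univ.analyticAt_fun_sum (fun i _ => analyticAt_normSq (hφ_an x i))
  have hg_zero : ∀ x, g x = 0 ↔ φ x = 0 := by
    intro x
    constructor
    · intro h
      funext i
      have := (Finset.sum_eq_zero_iff_of_nonneg
        (fun i _ => Complex.normSq_nonneg (φ x i))).mp h i (Finset.mem_univ i)
      exact Complex.normSq_eq_zero.mp this
    · intro h
      simp [hgdef, h]
  have hg_nonneg : ∀ x, 0 ≤ g x := fun x =>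
    Finset.sum_nonneg fun i _ => Complex.normSq_nonneg _
  have hg_int : ∀ (x : ℝ) (n : ℤ), g (x + n) = g x := by
    intro x n
    simp only [hgdef]
    rw [hφ_int x n]
  have hgne : ∃ x, g x ≠ 0 := by
    obtain ⟨x, hx⟩ := hφ_ne
    exact ⟨x, fun h => hx ((hg_zero x).mp h)⟩
  have hgpos : ∀ x, g x ≠ 0 → 0 < g x := fun x hx =>
    lt_of_le_of_ne (hg_nonneg x) (Ne.symm hx)
  have hiso : ∀ x, ∀ᶠ t in 𝓝[≠] x, g t ≠ 0 := by
    intro x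
    by_contra h
    rw [Filter.not_eventually] at h
    have hfreq : ∃ᶠ t in 𝓝[≠] x, g t = 0 := h.mono fun t ht => not_not.mp ht
    have heq := AnalyticOnNhd.eqOn_zero_of_preconnected_of_frequently_eq_zero
      (fun z _ => hg_an z) isPreconnected_univ (Set.mem_univ x) hfreq
    obtain ⟨y, hy⟩ := hgne
    exact hy (heq (Set.mem_univ y))
  -- zeros in a period are finite
  have hZfin : {x : ℝ | x ∈ Set.Ico (0:ℝ) 1 ∧ g x = 0}.Finite := by
    by_contra hinf
    obtain ⟨x, -, hacc⟩ := Set.Infinite.exists_accPt_of_subset_isCompact hinf isCompact_Icc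
      (fun y hy => Set.Ico_subset_Icc_self hy.1)
    rw [accPt_iff_frequently] at hacc
    have h1 := hiso x
    rw [eventually_nhdsWithin_iff] at h1
    obtain ⟨y, hy1, hy2⟩ := (hacc.and_eventually h1).exists
    exact hy2 (by simpa using hy1.1) hy1.2.2
  set Z : Finset ℝ := hZfin.toFinset with hZdef
  have hZmem : ∀ z, z ∈ Z ↔ (z ∈ Set.Ico (0:ℝ) 1 ∧ g z = 0) := fun z => by
    simp [hZdef, Set.Finite.mem_toFinset]
  set K : ℝ → ℕ := fun z => (⨅ i, analyticOrderAt (fun t => φ t i) z).toNat with hKdef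
  set P : ℝ → ℂ := fun x => ∏ z ∈ Z, (e x - e z) ^ K z with hPdef
  have hP_an : ∀ x, AnalyticAt ℝ P x := fun x =>
    Z.analyticAt_fun_prod (fun z _ => ((he_an x).sub analyticAt_const).pow _)
  have hP_per : ∀ x, P (x + 1) = P x := by
    intro x
    simp only [hPdef, he_per]
  have hP_ne : ∀ x, g x ≠ 0 → P x ≠ 0 := by
    intro x hx
    simp only [hPdef]
    apply Finset.prod_ne_zero_iff.mpr
    intro z hz
    apply pow_ne_zero
    rw [sub_ne_zero]
    intro hexz
    obtain ⟨n, hn⟩ := he_eq x z hexz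
    apply hx
    rw [hn, hg_int]
    exact ((hZmem z).mp hz).2
  -- the scalar function
  set c : ℝ → ℂ := fun x => if g x = 0 then 0 else
      P x * Complex.exp (Complex.log ((g x / Complex.normSq (P x) : ℝ) : ℂ) / 2) with hcdef
  have hc_zero : ∀ x, g x = 0 → c x = 0 := fun x hx => by
    simp only [hcdef, if_pos hx]
  have hc_nz_val : ∀ x, g x ≠ 0 → c x =
      P x * Complex.exp (Complex.log ((g x / Complex.normSq (P x) : ℝ) : ℂ) / 2) := fun x hx => by
    simp only [hcdef, if_neg hx]
  have hc_normSq : ∀ x, Complex.normSq (c x) = g x := by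
    intro x
    by_cases hx : g x = 0
    · rw [hc_zero x hx, hx]; simp
    · rw [hc_nz_val x hx, map_mul]
      have hPpos : 0 < Complex.normSq (P x) := Complex.normSq_pos.mpr (hP_ne x hx)
      rw [normSq_sqrtc (div_pos (hgpos x hx) hPpos)]
      field_simp
  have hc_ne : ∀ x, g x ≠ 0 → c x ≠ 0 := by
    intro x hx h0
    apply hx
    rw [← hc_normSq x, h0]
    simp
  have hc_per : ∀ x, c (x + 1) = c x := by
    intro x
    have hg1 : g (x + 1) = g x := by simpa using hg_int x 1
    by_cases hx : g x = 0
    · rw [hc_zero x hx, hc_zero _ (by rw [hg1]; exact hx)]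
    · rw [hc_nz_val x hx, hc_nz_val _ (by rw [hg1]; exact hx), hg1, hP_per]
  have hc_an_pos : ∀ x, g x ≠ 0 → AnalyticAt ℝ c x := by
    intro x hx
    have hPpos : 0 < Complex.normSq (P x) := Complex.normSq_pos.mpr (hP_ne x hx)
    have hu_an : AnalyticAt ℝ (fun t => g t / Complex.normSq (P t)) x :=
      (hg_an x).div (analyticAt_normSq (hP_an x)) (ne_of_gt hPpos)
    have hC : AnalyticAt ℝ (fun t => P t *
        Complex.exp (Complex.log ((g t / Complex.normSq (P t) : ℝ) : ℂ) / 2)) x :=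
      (hP_an x).mul (analyticAt_sqrtc hu_an (div_pos (hgpos x hx) hPpos))
    apply hC.congr
    filter_upwards [(hg_an x).continuousAt.eventually_ne hx] with t ht
    exact (hc_nz_val t ht).symm
  -- the local analysis at a zero
  have key2 : ∀ x₀, g x₀ = 0 → AnalyticAt ℝ c x₀ ∧ ∃ η : ℝ → Fin d → ℂ,
      (∀ i, AnalyticAt ℝ (fun t => η t i) x₀) ∧
      (∀ᶠ t in 𝓝[≠] x₀, g t ≠ 0 ∧ ∀ i, φ t i / c t = η t i) ∧
      (∑ i, Complex.normSq (η x₀ i) = 1) := by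
    intro x₀ hx₀
    set z₀ : ℝ := Int.fract x₀ with hz₀def
    set n : ℤ := ⌊x₀⌋ with hndef
    have hx₀z : x₀ = z₀ + (n : ℝ) := by
      rw [hz₀def, Int.fract, hndef]; ring
    have hgz₀ : g z₀ = 0 := by
      rw [← hg_int z₀ n, ← hx₀z]; exact hx₀
    have hz₀Z : z₀ ∈ Z := (hZmem z₀).mpr
      ⟨⟨Int.fract_nonneg x₀, Int.fract_lt_one x₀⟩, hgz₀⟩
    have hez : e x₀ = e z₀ := by rw [hx₀z]; exact he_int z₀ n
    have hnloc : ¬ ∀ᶠ t in 𝓝 z₀, ∀ i, φ t i = 0 := by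
      intro h
      have h' : ∀ᶠ t in 𝓝[≠] z₀, g t = 0 :=
        (h.filter_mono nhdsWithin_le_nhds).mono (fun t ht => by simp [hgdef, ht])
      obtain ⟨t, ht1, ht2⟩ := (h'.and (hiso z₀)).exists
      exact ht2 ht1
    obtain ⟨k, ρ₀, hkval, hk1, hρ₀_an, hρ₀_eq, hρ₀_pos⟩ :=
      loc_fact φ z₀ (fun i => hφ_an z₀ i) ((hg_zero z₀).mp hgz₀) hnloc
    have hKz₀ : K z₀ = k := by
      rw [hKdef]
      simp only [← hkval, ENat.toNat_coe]
    have hxz : x₀ - (n : ℝ) = z₀ := by rw [hx₀z]; ring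
    -- transported factorization
    set ρ : ℝ → Fin d → ℂ := fun t i => ρ₀ (t - (n : ℝ)) i with hρdef
    have hρ_an : ∀ i, AnalyticAt ℝ (fun t => ρ t i) x₀ := by
      intro i
      have hsub : AnalyticAt ℝ (fun t : ℝ => t - (n : ℝ)) x₀ :=
        (analyticAt_id).sub analyticAt_const
      have h1 : AnalyticAt ℝ (fun t => ρ₀ t i) (x₀ - (n : ℝ)) := by
        rw [hxz]; exact hρ₀_an i
      exact AnalyticAt.comp (f := fun t : ℝ => t - (n : ℝ)) h1 hsub
    have htend : Filter.Tendsto (fun t : ℝ => t - (n : ℝ)) (𝓝 x₀) (𝓝 z₀) := by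
      have : Filter.Tendsto (fun t : ℝ => t - (n : ℝ)) (𝓝 x₀) (𝓝 (x₀ - (n : ℝ))) :=
        (continuous_id.sub continuous_const).tendsto x₀
      rwa [hxz] at this
    have hρ_eq : ∀ᶠ t in 𝓝 x₀, ∀ i, φ t i = ((t - x₀ : ℝ) : ℂ) ^ k * ρ t i := by
      filter_upwards [htend.eventually hρ₀_eq] with t ht i
      have h1 : φ t = φ (t - (n : ℝ)) := by
        have := hφ_int (t - (n : ℝ)) n
        rw [sub_add_cancel] at this
        exact this
      have h2 : t - (n : ℝ) - z₀ = t - x₀ := by rw [hx₀z]; ring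
      rw [congrFun h1 i, ht i, h2]
    have hρ_pos : 0 < ∑ i, Complex.normSq (ρ x₀ i) := by
      simp only [hρdef, hxz]
      exact hρ₀_pos
    -- factor P
    set Q : ℝ → ℂ := fun t => ∏ z ∈ Z.erase z₀, (e t - e z) ^ K z with hQdef
    have hPQ : ∀ t, P t = (e t - e z₀) ^ K z₀ * Q t := fun t =>
      (Finset.mul_prod_erase Z _ hz₀Z).symm
    have hQ_an : AnalyticAt ℝ Q x₀ :=
      (Z.erase z₀).analyticAt_fun_prod (fun z _ => ((he_an x₀).sub analyticAt_const).pow _)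
    have hQ0 : Q x₀ ≠ 0 := by
      simp only [hQdef]
      apply Finset.prod_ne_zero_iff.mpr
      intro z hz
      apply pow_ne_zero
      rw [sub_ne_zero, hez]
      intro hzz
      obtain ⟨m, hm⟩ := he_eq z₀ z hzz
      have hzZ := ((hZmem z).mp (Finset.mem_of_mem_erase hz)).1
      have hz₀I : (0:ℝ) ≤ z₀ ∧ z₀ < 1 := ⟨Int.fract_nonneg _, Int.fract_lt_one _⟩
      have hmr : (m : ℝ) = z₀ - z := by rw [hm]; ring
      have hm0 : m = 0 := by
        have hlt : (m : ℝ) < 1 := by rw [hmr]; linarith [hzZ.1, hz₀I.2]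
        have hgt : (-1 : ℝ) < m := by rw [hmr]; linarith [hz₀I.1, hzZ.2]
        have hlt' : m < 1 := by exact_mod_cast hlt
        have hgt' : -1 < m := by exact_mod_cast hgt
        omega
      apply Finset.ne_of_mem_erase hz
      rw [hm0] at hm
      simpa using hm.symm
    obtain ⟨a, ha_an, ha0, haeq⟩ := exp_factor x₀
    set h : ℝ → ℝ := fun t => ∑ i, Complex.normSq (ρ t i) with hhdef
    have hh_an : AnalyticAt ℝ h x₀ :=
      Finset.univ.analyticAt_fun_sum (fun i _ => analyticAt_normSq (hρ_an i))
    have hh_pos : 0 < h x₀ := hρ_pos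
    set W : ℝ → ℝ := fun t => h t / (Complex.normSq (a t) ^ k * Complex.normSq (Q t)) with hWdef
    have hden_pos : 0 < Complex.normSq (a x₀) ^ k * Complex.normSq (Q x₀) :=
      mul_pos (pow_pos (Complex.normSq_pos.mpr ha0) k) (Complex.normSq_pos.mpr hQ0)
    have hW_an : AnalyticAt ℝ W x₀ :=
      hh_an.div (((analyticAt_normSq ha_an).pow k).mul (analyticAt_normSq hQ_an))
        (ne_of_gt hden_pos)
    have hW_pos : 0 < W x₀ := div_pos hh_pos hden_pos
    set Cl : ℝ → ℂ := fun t => P t * Complex.exp (Complex.log ((W t : ℝ) : ℂ) / 2) with hCldef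
    have hCl_an : AnalyticAt ℝ Cl x₀ := (hP_an x₀).mul (analyticAt_sqrtc hW_an hW_pos)
    have hmain : ∀ᶠ t in 𝓝 x₀, t ≠ x₀ → (g t ≠ 0 ∧ c t = Cl t ∧
        ∀ i, φ t i / c t =
          ρ t i / ((a t) ^ k * Q t * Complex.exp (Complex.log ((W t : ℝ) : ℂ) / 2))) := by
      filter_upwards [haeq, hρ_eq, ha_an.continuousAt.eventually_ne ha0,
        hQ_an.continuousAt.eventually_ne hQ0,
        hh_an.continuousAt.eventually_ne (ne_of_gt hh_pos)] with t he1 he2 ha' hQ' hh' htne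
      have hr0 : (t - x₀ : ℝ) ≠ 0 := sub_ne_zero.mpr htne
      have hr : ((t - x₀ : ℝ) : ℂ) ≠ 0 := by exact_mod_cast hr0
      have hgt : g t = ((t - x₀) ^ 2) ^ k * h t := by
        simp only [hgdef, hhdef]
        rw [Finset.mul_sum]
        apply Finset.sum_congr rfl
        intro i _
        rw [he2 i, map_mul, map_pow, Complex.normSq_ofReal]
        ring
      have hgt0 : g t ≠ 0 := by
        rw [hgt]
        exact mul_ne_zero (pow_ne_zero _ (pow_ne_zero _ hr0)) hh'
      have hPt : P t = ((t - x₀ : ℝ) : ℂ) ^ k * ((a t) ^ k * Q t) := by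
        rw [hPQ t, hKz₀, ← hez, he1, mul_pow]
        ring
      have hnP : Complex.normSq (P t) =
          ((t - x₀) ^ 2) ^ k * (Complex.normSq (a t) ^ k * Complex.normSq (Q t)) := by
        rw [hPt, map_mul, map_pow, Complex.normSq_ofReal, map_mul, map_pow]
        ring
      have hu : g t / Complex.normSq (P t) = W t := by
        rw [hgt, hnP, hWdef]
        rw [mul_div_mul_left _ _ (pow_ne_zero _ (pow_ne_zero _ hr0))]
      have hct : c t = Cl t := by
        rw [hc_nz_val t hgt0, hCldef, hu]
      refine ⟨hgt0, hct, ?_⟩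
      intro i
      rw [hct]
      simp only [hCldef]
      rw [he2 i, hPt]
      rw [show ((t - x₀ : ℝ) : ℂ) ^ k * ((a t) ^ k * Q t) *
            Complex.exp (Complex.log ((W t : ℝ) : ℂ) / 2)
          = ((t - x₀ : ℝ) : ℂ) ^ k *
            ((a t) ^ k * Q t * Complex.exp (Complex.log ((W t : ℝ) : ℂ) / 2)) from by ring]
      rw [mul_div_mul_left _ _ (pow_ne_zero k hr)]
    have hcCl : c =ᶠ[𝓝 x₀] Cl := by
      filter_upwards [hmain] with t ht
      by_cases htx : t = x₀
      · subst htx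
        rw [hc_zero t hx₀]
        simp only [hCldef]
        have hPt0 : P t = 0 := by
          rw [hPQ t, ← hez, sub_self, zero_pow (by rw [hKz₀]; omega), zero_mul]
        rw [hPt0, zero_mul]
      · exact (ht htx).2.1
    have hc_anx : AnalyticAt ℝ c x₀ := hCl_an.congr hcCl.symm
    set η : ℝ → Fin d → ℂ := fun t i =>
      ρ t i / ((a t) ^ k * Q t * Complex.exp (Complex.log ((W t : ℝ) : ℂ) / 2)) with hηdef
    have hηden : (a x₀) ^ k * Q x₀ * Complex.exp (Complex.log ((W x₀ : ℝ) : ℂ) / 2) ≠ 0 :=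
      mul_ne_zero (mul_ne_zero (pow_ne_zero _ ha0) hQ0) (Complex.exp_ne_zero _)
    have hη_an : ∀ i, AnalyticAt ℝ (fun t => η t i) x₀ := fun i =>
      (hρ_an i).div (((ha_an.pow k).mul hQ_an).mul (analyticAt_sqrtc hW_an hW_pos)) hηden
    have hmain' : ∀ᶠ t in 𝓝[≠] x₀, g t ≠ 0 ∧ ∀ i, φ t i / c t = η t i := by
      rw [eventually_nhdsWithin_iff]
      filter_upwards [hmain] with t ht htm
      have h2 := ht (by simpa using htm)
      exact ⟨h2.1, h2.2.2⟩
    have hN : ∑ i, Complex.normSq (η x₀ i) = 1 := by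
      set N : ℝ → ℝ := fun t => ∑ i, Complex.normSq (η t i) with hNdef
      have hN_an : AnalyticAt ℝ N x₀ :=
        Finset.univ.analyticAt_fun_sum (fun i _ => analyticAt_normSq (hη_an i))
      have h1 : Filter.Tendsto N (𝓝[≠] x₀) (𝓝 (N x₀)) :=
        (hN_an.continuousAt.tendsto).mono_left nhdsWithin_le_nhds
      have h2 : N =ᶠ[𝓝[≠] x₀] (fun _ => (1:ℝ)) := by
        filter_upwards [hmain'] with t ht
        have e1 : N t = ∑ i, Complex.normSq (φ t i / c t) := by
          simp only [hNdef]
          exact Finset.sum_congr rfl (fun i _ => by rw [ht.2 i])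
        have e2 : ∑ i, Complex.normSq (φ t i / c t)
            = (∑ i, Complex.normSq (φ t i)) / Complex.normSq (c t) := by
          rw [Finset.sum_div]
          exact Finset.sum_congr rfl (fun i _ => by rw [map_div₀])
        rw [e1, e2]
        have e3 : ∑ i, Complex.normSq (φ t i) = g t := rfl
        rw [e3, hc_normSq t]
        exact div_self ht.1
      have h3 : Filter.Tendsto N (𝓝[≠] x₀) (𝓝 1) :=
        Filter.Tendsto.congr' h2.symm tendsto_const_nhds
      exact tendsto_nhds_unique h1 h3
    exact ⟨hc_anx, η, hη_an, hmain', hN⟩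
  have hc_an : ∀ x, AnalyticAt ℝ c x := by
    intro x
    by_cases hx : g x = 0
    · exact (key2 x hx).1
    · exact hc_an_pos x hx
  set ψ : ℝ → Fin d → ℂ := fun x i => if g x = 0 then
      limUnder (𝓝[≠] x) (fun t => φ t i / c t) else φ x i / c x with hψdef
  have hψ_nz : ∀ x, g x ≠ 0 → ∀ i, ψ x i = φ x i / c x := by
    intro x hx i
    simp only [hψdef, if_neg hx]
  have hψ_zero : ∀ x₀, g x₀ = 0 → ∃ η : ℝ → Fin d → ℂ,
      (∀ i, AnalyticAt ℝ (fun t => η t i) x₀) ∧ (∀ i, ψ x₀ i = η x₀ i) ∧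
      (∀ i, (fun t => ψ t i) =ᶠ[𝓝 x₀] (fun t => η t i)) ∧
      (∑ i, Complex.normSq (η x₀ i) = 1) := by
    intro x₀ hx₀
    obtain ⟨-, η, hη_an, hmain', hN⟩ := key2 x₀ hx₀
    have hval : ∀ i, ψ x₀ i = η x₀ i := by
      intro i
      have htendη : Filter.Tendsto (fun t => η t i) (𝓝[≠] x₀) (𝓝 (η x₀ i)) :=
        ((hη_an i).continuousAt.tendsto).mono_left nhdsWithin_le_nhds
      have htends : Filter.Tendsto (fun t => φ t i / c t) (𝓝[≠] x₀) (𝓝 (η x₀ i)) := by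
        apply htendη.congr'
        filter_upwards [hmain'] with t ht
        exact (ht.2 i).symm
      simp only [hψdef, if_pos hx₀]
      exact htends.limUnder_eq
    refine ⟨η, hη_an, hval, ?_, hN⟩
    intro i
    have h1 := hmain'
    rw [eventually_nhdsWithin_iff] at h1
    filter_upwards [h1] with t ht
    by_cases htx : t = x₀
    · subst htx
      exact hval i
    · have h2 := ht (by simpa using htx)
      rw [hψ_nz t h2.1 i]
      exact h2.2 i
  have hψ_an : ∀ (x : ℝ) (i : Fin d), AnalyticAt ℝ (fun t => ψ t i) x := by
    intro x i
    by_cases hx : g x = 0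
    · obtain ⟨η, hη_an, -, hev, -⟩ := hψ_zero x hx
      exact (hη_an i).congr (hev i).symm
    · have hfc : AnalyticAt ℝ (fun t => φ t i / c t) x :=
        (hφ_an x i).div (hc_an x) (hc_ne x hx)
      apply hfc.congr
      filter_upwards [(hg_an x).continuousAt.eventually_ne hx] with t ht
      exact (hψ_nz t ht i).symm
  have hnorm : ∀ x, ∑ i, Complex.normSq (ψ x i) = 1 := by
    intro x
    by_cases hx : g x = 0
    · obtain ⟨η, -, hval, -, hN⟩ := hψ_zero x hx
      rw [Finset.sum_congr rfl (fun i _ => by rw [hval i])]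
      exact hN
    · have e1 : ∀ i : Fin d, Complex.normSq (ψ x i)
          = Complex.normSq (φ x i) / Complex.normSq (c x) := fun i => by
        rw [hψ_nz x hx i, map_div₀]
      rw [Finset.sum_congr rfl (fun i _ => e1 i), ← Finset.sum_div, hc_normSq x]
      exact div_self hx
  have hψ_per : ∀ x, ψ (x + 1) = ψ x := by
    intro x
    funext i
    have hg1 : g (x + 1) = g x := by simpa using hg_int x 1
    by_cases hx : g x = 0
    · have hx1 : g (x + 1) = 0 := by rw [hg1]; exact hx
      simp only [hψdef, if_pos hx, if_pos hx1]
      have hFper : (fun t : ℝ => φ t i / c t) ∘ (fun t : ℝ => t + 1)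
          = fun t : ℝ => φ t i / c t := by
        funext t
        simp only [Function.comp_apply]
        rw [congrFun (hφ_per t) i, hc_per t]
      have hmap : Filter.map (fun t : ℝ => t + 1) (𝓝[≠] x) = 𝓝[≠] (x + 1) := by
        have := (Homeomorph.addRight (1:ℝ)).map_punctured_nhds_eq x
        simpa using this
      rw [show (limUnder (𝓝[≠] (x+1)) (fun t => φ t i / c t))
            = lim (Filter.map (fun t => φ t i / c t) (𝓝[≠] (x+1))) from rfl,
          show (limUnder (𝓝[≠] x) (fun t => φ t i / c t))
            = lim (Filter.map (fun t => φ t i / c t) (𝓝[≠] x)) from rfl,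
          ← hmap, Filter.map_map, hFper]
    · have hx1 : g (x + 1) ≠ 0 := by rw [hg1]; exact hx
      rw [hψ_nz _ hx1 i, hψ_nz x hx i, congrFun (hφ_per x) i, hc_per x]
  refine ⟨ψ, c, hψ_per, hψ_an, hc_per, hc_an, ?_, ?_⟩
  · intro x
    simp only [Complex.sq_norm]
    exact hnorm x
  · intro x i
    by_cases hx : g x = 0
    · rw [hc_zero x hx, zero_mul]
      have hφ0 : φ x = 0 := (hg_zero x).mp hx
      simpa using congrFun hφ0 i
    · rw [hψ_nz x hx i, mul_div_cancel₀ _ (hc_ne x hx)]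

end
end

section
/- Let A : ℝ → ℂ^{d×d} be real analytic and 1-periodic, and let P : ℝ → ℂ^{d×d} be real analytic and 1-periodic with each P(x) an orthogonal projection of rank k. If the dimension of the preimage subspace A(x)^{−1}(ran P(x)) = {v ∈ ℂ^d : A(x)v ∈ ran P(x)} is constant in x, then the map assigning to x the orthogonal projection onto A(x)^{−1}(ran P(x)) is real analytic and 1-periodic. In particular, if dim ker A(x) is constant, the orthogonal projection onto ker A(x) is real analytic. -/
open MeasureTheory Filter Topology Matrix

/-- A real analytic, 1-periodic matrix valued map. -/
def AnalyticPeriodicMat {d e : ℕ} (A : ℝ → Matrix (Fin d) (Fin e) ℂ) : Prop :=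
  Function.Periodic A 1 ∧ ∀ (x : ℝ) (i : Fin d) (j : Fin e), AnalyticAt ℝ (fun t => A t i j) x

/-- `P` is an orthogonal projection matrix (w.r.t. the Hermitian inner product). -/
def IsOrthProj {d : ℕ} (P : Matrix (Fin d) (Fin d) ℂ) : Prop :=
  P * P = P ∧ Pᴴ = P

/-- The range (column span) of a matrix, as a subspace of `ℂ^d`. -/
noncomputable def matRange {d e : ℕ} (M : Matrix (Fin d) (Fin e) ℂ) : Submodule ℂ (Fin d → ℂ) :=
  LinearMap.range M.mulVecLin

section Aux
open Polynomial

namespace Stmt13Aux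

open scoped ComplexOrder

variable {d : ℕ}

/-- candidate projection matrix, as an explicit polynomial-in-`M` formula. -/
noncomputable def Qmat (m : ℕ) {d : ℕ} (M : Matrix (Fin d) (Fin d) ℂ) : Matrix (Fin d) (Fin d) ℂ :=
  (M.charpoly.coeff m)⁻¹ • ∑ j ∈ Finset.range (d + 1), M.charpoly.coeff (m + j) • M ^ j

lemma charpoly_conj (U V M : Matrix (Fin d) (Fin d) ℂ) (h1 : U * V = 1) :
    (U * M * V).charpoly = M.charpoly := by
  have hcomm : ∀ A : Matrix (Fin d) (Fin d) ℂ,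
      Commute (Matrix.scalar (Fin d) (X : ℂ[X])) ((C : ℂ →+* ℂ[X]).mapMatrix A) :=
    fun A => Matrix.scalar_commute _ (fun r => Commute.all _ _) _
  have h1' : (C : ℂ →+* ℂ[X]).mapMatrix U * (C : ℂ →+* ℂ[X]).mapMatrix V = 1 := by
    rw [← _root_.map_mul, h1, _root_.map_one]
  have hs : (C : ℂ →+* ℂ[X]).mapMatrix U * Matrix.scalar (Fin d) (X : ℂ[X]) *
      (C : ℂ →+* ℂ[X]).mapMatrix V = Matrix.scalar (Fin d) (X : ℂ[X]) := by
    rw [← (hcomm U).eq, mul_assoc, h1', mul_one]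
  have hch : (C : ℂ →+* ℂ[X]).mapMatrix U * charmatrix M * (C : ℂ →+* ℂ[X]).mapMatrix V
      = charmatrix (U * M * V) := by
    unfold charmatrix
    rw [Matrix.mul_sub, Matrix.sub_mul, hs]
    rw [sub_right_inj]
    simp [Matrix.mul_assoc]
  unfold Matrix.charpoly
  rw [← hch, det_mul, det_mul]
  have hd : ((C : ℂ →+* ℂ[X]).mapMatrix U).det * ((C : ℂ →+* ℂ[X]).mapMatrix V).det = 1 := by
    rw [← det_mul, h1', det_one]
  calc ((C : ℂ →+* ℂ[X]).mapMatrix U).det * (charmatrix M).det *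
        ((C : ℂ →+* ℂ[X]).mapMatrix V).det
      = (charmatrix M).det * (((C : ℂ →+* ℂ[X]).mapMatrix U).det *
        ((C : ℂ →+* ℂ[X]).mapMatrix V).det) := by ring
    _ = (charmatrix M).det := by rw [hd, mul_one]

lemma conj_pow (U V D : Matrix (Fin d) (Fin d) ℂ) (h1 : U * V = 1) (j : ℕ) :
    (U * D * V) ^ j = U * D ^ j * V := by
  induction j with
  | zero => simp [h1]
  | succ n ih =>
      rw [pow_succ, ih, pow_succ]
      have h2 : V * U = 1 := mul_eq_one_comm.mp h1
      calc U * D ^ n * V * (U * D * V) = U * D ^ n * (V * U) * D * V := by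
            simp only [Matrix.mul_assoc]
          _ = U * (D ^ n * D) * V := by rw [h2]; simp only [Matrix.mul_one, Matrix.mul_assoc]


lemma charpoly_diag (v : Fin d → ℂ) :
    (Matrix.diagonal v).charpoly = ∏ i, (X - C (v i)) := by
  rw [Matrix.charpoly_of_upperTriangular _ (Matrix.blockTriangular_diagonal v)]
  simp

lemma eval_charpoly (M : Matrix (Fin d) (Fin d) ℂ) (t : ℂ) :
    M.charpoly.eval t = (t • (1 : Matrix (Fin d) (Fin d) ℂ) - M).det := by
  unfold Matrix.charpoly
  rw [← Polynomial.coe_evalRingHom, RingHom.map_det]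
  congr 1
  ext i j
  by_cases h : i = j <;>
    simp [charmatrix_apply, Matrix.diagonal_apply, h, Matrix.smul_apply, Matrix.one_apply]

lemma Qmat_spec (B : Matrix (Fin d) (Fin d) ℂ) (m : ℕ)
    (hm : Module.finrank ℂ (LinearMap.ker B.mulVecLin) = m) :
    ((Bᴴ * B).charpoly.coeff m ≠ 0) ∧
    (Qmat m (Bᴴ * B) * Qmat m (Bᴴ * B) = Qmat m (Bᴴ * B) ∧
      (Qmat m (Bᴴ * B))ᴴ = Qmat m (Bᴴ * B)) ∧
    LinearMap.range (Qmat m (Bᴴ * B)).mulVecLin = LinearMap.ker B.mulVecLin := by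
  classical
  set M := Bᴴ * B with hMdef
  have hM : M.IsHermitian := isHermitian_conjTranspose_mul_self B
  set μ : Fin d → ℝ := hM.eigenvalues with hμ
  set U : Matrix (Fin d) (Fin d) ℂ := (hM.eigenvectorUnitary : Matrix (Fin d) (Fin d) ℂ) with hUdef
  have hU1 : U * star U = 1 := mem_unitaryGroup_iff.mp hM.eigenvectorUnitary.2
  have hU2 : star U * U = 1 := mem_unitaryGroup_iff'.mp hM.eigenvectorUnitary.2
  set D : Matrix (Fin d) (Fin d) ℂ := Matrix.diagonal (RCLike.ofReal ∘ μ) with hDdef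
  have hspec : M = U * D * star U := hM.spectral_theorem
  have hchar : M.charpoly = ∏ i, (X - C ((μ i : ℝ) : ℂ)) := by
    rw [hspec, charpoly_conj _ _ _ hU1, charpoly_diag]
    rfl
  -- cardinality of the zero set of eigenvalues
  have hcardnz : (Finset.univ.filter (fun i => ¬ μ i = 0)).card + m = d := by
    have h1 : M.rank = Fintype.card {i // μ i ≠ 0} := hM.rank_eq_card_non_zero_eigs
    have h2 : M.rank = B.rank := Matrix.rank_conjTranspose_mul_self B
    have h3 : B.rank + m = d := by
      rw [← hm, Matrix.rank]
      rw [LinearMap.finrank_range_add_finrank_ker B.mulVecLin, Module.finrank_fin_fun]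
    have h4 : Fintype.card {i // μ i ≠ 0} =
        (Finset.univ.filter (fun i => ¬ μ i = 0)).card := Fintype.card_subtype _
    omega
  have hcardZ : (Finset.univ.filter (fun i => μ i = 0)).card = m := by
    have := Finset.card_filter_add_card_filter_not
      (s := (Finset.univ : Finset (Fin d))) (p := fun i => μ i = 0)
    simp only [Finset.card_univ, Fintype.card_fin] at this
    omega
  set p : ℂ[X] := ∏ i ∈ Finset.univ.filter (fun i => ¬ μ i = 0), (X - C ((μ i : ℝ) : ℂ))
    with hpdef
  have hfact : M.charpoly = X ^ m * p := by
    rw [hchar, ← Finset.prod_filter_mul_prod_filter_not Finset.univ (fun i => μ i = 0)]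
    congr 1
    rw [Finset.prod_congr rfl (fun i hi => ?_), Finset.prod_const, hcardZ]
    rw [(Finset.mem_filter.mp hi).2]
    simp
  have hcoeff : ∀ j, M.charpoly.coeff (m + j) = p.coeff j := fun j => by
    rw [hfact, add_comm, Polynomial.coeff_X_pow_mul]
  set c₀ : ℂ := M.charpoly.coeff m with hc₀def
  have hc₀p : c₀ = p.coeff 0 := by
    have := hcoeff 0
    rwa [add_zero] at this
  have hc₀ : c₀ = ∏ i ∈ Finset.univ.filter (fun i => ¬ μ i = 0), (0 - ((μ i : ℝ) : ℂ)) := by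
    rw [hc₀p, Polynomial.coeff_zero_eq_eval_zero, hpdef, Polynomial.eval_prod]
    simp
  have hc₀ne : c₀ ≠ 0 := by
    rw [hc₀]
    apply Finset.prod_ne_zero_iff.mpr
    intro i hi
    have : μ i ≠ 0 := by simpa using (Finset.mem_filter.mp hi).2
    simp only [zero_sub, ne_eq, neg_eq_zero]
    exact_mod_cast this
  have hpdeg : p.natDegree < d + 1 := by
    have h1 : p.natDegree ≤ (Finset.univ.filter (fun i => ¬ μ i = 0)).card := by
      refine le_trans (Polynomial.natDegree_prod_le _ _) ?_
      refine le_trans (Finset.sum_le_card_nsmul _ _ 1 ?_) (by simp)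
      intro i _
      simp [Polynomial.natDegree_X_sub_C]
    have h2 := Finset.card_filter_le (Finset.univ : Finset (Fin d)) (fun i => ¬ μ i = 0)
    simp only [Finset.card_univ, Fintype.card_fin] at h2
    omega
  have hsum : ∑ j ∈ Finset.range (d + 1), M.charpoly.coeff (m + j) • M ^ j =
      Polynomial.aeval M p := by
    rw [Polynomial.aeval_eq_sum_range' hpdeg]
    exact Finset.sum_congr rfl fun j _ => by rw [hcoeff j]
  have haev : Polynomial.aeval M p = U * Polynomial.aeval D p * star U := by
    rw [Polynomial.aeval_eq_sum_range' (x := M) hpdeg,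
      Polynomial.aeval_eq_sum_range' (x := D) hpdeg, Finset.mul_sum, Finset.sum_mul]
    refine Finset.sum_congr rfl fun j _ => ?_
    rw [hspec, conj_pow _ _ _ hU1, mul_smul_comm, smul_mul_assoc]
  have haevD : Polynomial.aeval D p = Matrix.diagonal (fun i => p.eval ((μ i : ℝ) : ℂ)) := by
    have h1 : Polynomial.aeval D p =
        Matrix.diagonalAlgHom ℂ (Polynomial.aeval (RCLike.ofReal ∘ μ : Fin d → ℂ) p) := by
      rw [← Polynomial.aeval_algHom_apply]
      rfl
    rw [h1]
    have h2 : (Polynomial.aeval (RCLike.ofReal ∘ μ : Fin d → ℂ) p) =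
        fun i => p.eval ((μ i : ℝ) : ℂ) := by
      funext i
      have h3 := Polynomial.aeval_algHom_apply
        (Pi.evalAlgHom ℂ (fun _ : Fin d => ℂ) i) (RCLike.ofReal ∘ μ) p
      simp only [Pi.evalAlgHom_apply] at h3
      rw [← h3, Polynomial.coe_aeval_eq_eval]
      rfl
    rw [h2]
    rfl
  have hpev : ∀ i, p.eval ((μ i : ℝ) : ℂ) = if μ i = 0 then c₀ else 0 := by
    intro i
    by_cases h : μ i = 0
    · rw [if_pos h, h, hc₀p, Polynomial.coeff_zero_eq_eval_zero]
      norm_num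
    · rw [if_neg h, hpdef, Polynomial.eval_prod]
      apply Finset.prod_eq_zero (Finset.mem_filter.mpr ⟨Finset.mem_univ i, h⟩)
      simp
  set E : Matrix (Fin d) (Fin d) ℂ :=
    Matrix.diagonal (fun i => if μ i = 0 then (1 : ℂ) else 0) with hEdef
  have hQE : Qmat m M = U * E * star U := by
    unfold Qmat
    rw [hsum, haev, haevD, ← smul_mul_assoc, ← mul_smul_comm]
    have harg : (M.charpoly.coeff m)⁻¹ • (fun i => p.eval ((μ i : ℝ) : ℂ)) =
        fun i => if μ i = 0 then (1 : ℂ) else 0 := by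
      funext i
      rw [Pi.smul_apply, hpev i, smul_eq_mul]
      by_cases h : μ i = 0
      · rw [if_pos h, if_pos h, ← hc₀def, inv_mul_cancel₀ hc₀ne]
      · rw [if_neg h, if_neg h, mul_zero]
    rw [← Matrix.diagonal_smul, harg, hEdef]
  have hEE : E * E = E := by
    have harg : (fun i => (if μ i = 0 then (1 : ℂ) else 0) * (if μ i = 0 then (1 : ℂ) else 0)) =
        fun i => if μ i = 0 then (1 : ℂ) else 0 := by
      funext i; by_cases h : μ i = 0 <;> simp [h]
    rw [hEdef, Matrix.diagonal_mul_diagonal, harg]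
  have hQQ : Qmat m M * Qmat m M = Qmat m M := by
    rw [hQE]
    calc U * E * star U * (U * E * star U)
        = U * E * ((star U * U) * (E * star U)) := by simp only [Matrix.mul_assoc]
      _ = U * (E * E) * star U := by rw [hU2, Matrix.one_mul]; simp only [Matrix.mul_assoc]
      _ = U * E * star U := by rw [hEE]
  have hE : Eᴴ = E := by
    have harg : (star fun i => if μ i = 0 then (1 : ℂ) else 0) =
        fun i => if μ i = 0 then (1 : ℂ) else 0 := by
      funext i
      rw [Pi.star_apply]
      by_cases h : μ i = 0 <;> simp [h]
    rw [hEdef, Matrix.diagonal_conjTranspose, harg]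
  have hQH : (Qmat m M)ᴴ = Qmat m M := by
    have h5 : (star U)ᴴ = U := by rw [← Matrix.star_eq_conjTranspose, star_star]
    have h6 : Uᴴ = star U := (Matrix.star_eq_conjTranspose U).symm
    rw [hQE, Matrix.conjTranspose_mul, Matrix.conjTranspose_mul, h5, hE, h6, ← Matrix.mul_assoc]
  have hDE : D * E = 0 := by
    have harg : (fun i => (RCLike.ofReal ∘ μ) i * (if μ i = 0 then (1 : ℂ) else 0)) =
        fun _ => (0 : ℂ) := by
      funext i
      by_cases h : μ i = 0 <;> simp [h, Function.comp]
    rw [hDdef, hEdef, Matrix.diagonal_mul_diagonal, harg, Matrix.diagonal_zero]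
  have hMQ : M * Qmat m M = 0 := by
    rw [hQE]
    nth_rewrite 1 [hspec]
    calc U * D * star U * (U * E * star U)
        = U * (D * ((star U * U) * (E * star U))) := by simp only [Matrix.mul_assoc]
      _ = U * (D * E) * star U := by rw [hU2, Matrix.one_mul]; simp only [Matrix.mul_assoc]
      _ = 0 := by rw [hDE, Matrix.mul_zero, Matrix.zero_mul]
  refine ⟨hc₀ne, ⟨hQQ, hQH⟩, ?_⟩
  rw [← Matrix.ker_mulVecLin_conjTranspose_mul_self, ← hMdef]
  apply le_antisymm
  · rintro v ⟨w, rfl⟩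
    simp only [LinearMap.mem_ker, Matrix.mulVecLin_apply, Matrix.mulVec_mulVec, hMQ,
      Matrix.zero_mulVec]
  · intro v hv
    have h0 : M *ᵥ v = 0 := hv
    have h1 : (D * star U) *ᵥ v = 0 := by
      have h2 : star U *ᵥ (M *ᵥ v) = 0 := by rw [h0, Matrix.mulVec_zero]
      rw [Matrix.mulVec_mulVec] at h2
      nth_rewrite 1 [hspec] at h2
      rwa [show star U * (U * D * star U) = D * star U from by
        rw [← Matrix.mul_assoc, ← Matrix.mul_assoc, hU2, Matrix.one_mul]] at h2
    have hw : D *ᵥ (star U *ᵥ v) = 0 := by rw [Matrix.mulVec_mulVec]; exact h1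
    have hEw : E *ᵥ (star U *ᵥ v) = star U *ᵥ v := by
      funext i
      have hi := congrFun hw i
      simp only [hDdef, hEdef, Matrix.mulVec_diagonal, Function.comp_apply,
        Pi.zero_apply] at hi ⊢
      by_cases h : μ i = 0
      · simp [h]
      · have hne : ((μ i : ℝ) : ℂ) ≠ 0 := by
          simpa using h
        have hz := (mul_eq_zero.mp hi).resolve_left hne
        simp [h, hz]
    refine ⟨v, ?_⟩
    rw [Matrix.mulVecLin_apply, hQE, ← Matrix.mulVec_mulVec, ← Matrix.mulVec_mulVec, hEw,
      Matrix.mulVec_mulVec, hU1, Matrix.one_mulVec]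


section Analytic

lemma analyticAt_mul_entry {d e f : ℕ} (N : ℝ → Matrix (Fin d) (Fin e) ℂ)
    (O : ℝ → Matrix (Fin e) (Fin f) ℂ)
    (hN : ∀ x i j, AnalyticAt ℝ (fun t => N t i j) x)
    (hO : ∀ x i j, AnalyticAt ℝ (fun t => O t i j) x) :
    ∀ x i j, AnalyticAt ℝ (fun t => (N t * O t) i j) x := by
  intro x i j
  have h : (fun t => (N t * O t) i j) = fun t => ∑ k, N t i k * O t k j := by
    funext t; rw [Matrix.mul_apply]
  rw [h]
  exact Finset.analyticAt_fun_sum _ fun k _ => (hN x i k).mul (hO x k j)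

lemma analyticAt_conj {f : ℝ → ℂ} {x : ℝ} (hf : AnalyticAt ℝ f x) :
    AnalyticAt ℝ (fun t => (starRingEnd ℂ) (f t)) x := by
  have h := (Complex.conjCLE.toContinuousLinearMap.analyticAt (f x)).comp hf
  exact h

lemma analyticAt_conjTranspose_entry {d e : ℕ} (N : ℝ → Matrix (Fin d) (Fin e) ℂ)
    (hN : ∀ x i j, AnalyticAt ℝ (fun t => N t i j) x) :
    ∀ x i j, AnalyticAt ℝ (fun t => (N t)ᴴ i j) x := by
  intro x i j
  have h : (fun t => (N t)ᴴ i j) = fun t => (starRingEnd ℂ) (N t j i) := by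
    funext t; rw [Matrix.conjTranspose_apply]; rfl
  rw [h]
  exact analyticAt_conj (hN x j i)

lemma analyticAt_pow_entry {d : ℕ} (N : ℝ → Matrix (Fin d) (Fin d) ℂ)
    (hN : ∀ x i j, AnalyticAt ℝ (fun t => N t i j) x) (n : ℕ) :
    ∀ x i j, AnalyticAt ℝ (fun t => (N t ^ n) i j) x := by
  induction n with
  | zero =>
      intro x i j
      have h : (fun t => (N t ^ 0) i j) = fun _ => (1 : Matrix (Fin d) (Fin d) ℂ) i j := by
        funext t; rw [pow_zero]
      rw [h]; exact analyticAt_const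
  | succ n ih =>
      intro x i j
      have h : (fun t => (N t ^ (n + 1)) i j) = fun t => ((N t ^ n) * N t) i j := by
        funext t; rw [pow_succ]
      rw [h]
      exact analyticAt_mul_entry (fun t => N t ^ n) N ih hN x i j

lemma analyticAt_det {d : ℕ} (N : ℝ → Matrix (Fin d) (Fin d) ℂ)
    (hN : ∀ x i j, AnalyticAt ℝ (fun t => N t i j) x) (x : ℝ) :
    AnalyticAt ℝ (fun t => (N t).det) x := by
  have h : (fun t => (N t).det) =
      fun t => ∑ σ : Equiv.Perm (Fin d), ((Equiv.Perm.sign σ : ℤ) : ℂ) * ∏ i, N t (σ i) i := by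
    funext t; rw [Matrix.det_apply']
  rw [h]
  exact Finset.analyticAt_fun_sum _ fun σ _ =>
    analyticAt_const.mul (Finset.analyticAt_fun_prod _ fun i _ => hN x (σ i) i)

lemma analyticAt_charpoly_coeff {d : ℕ} (N : ℝ → Matrix (Fin d) (Fin d) ℂ)
    (hN : ∀ x i j, AnalyticAt ℝ (fun t => N t i j) x) (k : ℕ) (x : ℝ) :
    AnalyticAt ℝ (fun t => (N t).charpoly.coeff k) x := by
  classical
  set v : Fin (d + 1) → ℂ := fun i => ((i : ℕ) : ℂ) with hv
  have hinj : Set.InjOn v (Finset.univ : Finset (Fin (d + 1))) := by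
    intro a _ b _ hab
    have : ((a : ℕ) : ℂ) = ((b : ℕ) : ℂ) := hab
    exact Fin.ext (by exact_mod_cast this)
  have hrepr : (fun t => (N t).charpoly.coeff k) =
      fun t => ∑ i : Fin (d + 1),
        ((v i) • (1 : Matrix (Fin d) (Fin d) ℂ) - N t).det *
          ((Lagrange.basis Finset.univ v i).coeff k) := by
    funext t
    have hdeg : ((N t).charpoly).degree < (Finset.univ : Finset (Fin (d + 1))).card := by
      rw [Matrix.charpoly_degree_eq_dim, Finset.card_univ, Fintype.card_fin, Fintype.card_fin]
      exact_mod_cast Nat.lt_succ_self d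
    conv_lhs => rw [Lagrange.eq_interpolate hinj hdeg]
    rw [Lagrange.interpolate_apply, Polynomial.finset_sum_coeff]
    refine Finset.sum_congr rfl fun i _ => ?_
    rw [Polynomial.coeff_C_mul, eval_charpoly]
  rw [hrepr]
  refine Finset.analyticAt_fun_sum _ fun i _ => (analyticAt_det _ ?_ x).mul analyticAt_const
  intro y a b
  have h : (fun t => ((v i) • (1 : Matrix (Fin d) (Fin d) ℂ) - N t) a b) =
      fun t => ((v i) • (1 : Matrix (Fin d) (Fin d) ℂ)) a b - N t a b := by
    funext t; rw [Matrix.sub_apply]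
  rw [h]
  exact analyticAt_const.sub (hN y a b)

lemma analyticAt_Qmat {d : ℕ} (m : ℕ) (N : ℝ → Matrix (Fin d) (Fin d) ℂ)
    (hN : ∀ x i j, AnalyticAt ℝ (fun t => N t i j) x)
    (hc : ∀ x, (N x).charpoly.coeff m ≠ 0) :
    ∀ x i j, AnalyticAt ℝ (fun t => Qmat m (N t) i j) x := by
  intro x i j
  have hrepr : (fun t => Qmat m (N t) i j) = fun t => ((N t).charpoly.coeff m)⁻¹ *
      ∑ jj ∈ Finset.range (d + 1), (N t).charpoly.coeff (m + jj) * ((N t) ^ jj) i j := by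
    funext t
    simp [Qmat, Matrix.sum_apply]
  rw [hrepr]
  exact ((analyticAt_charpoly_coeff N hN m x).inv (hc x)).mul
    (Finset.analyticAt_fun_sum _ fun jj _ =>
      (analyticAt_charpoly_coeff N hN (m + jj) x).mul (analyticAt_pow_entry N hN jj x i j))

end Analytic

/-- main family lemma: analytic periodic projections onto `ker B(x)`. -/
lemma exists_proj {d : ℕ} (m : ℕ) (B : ℝ → Matrix (Fin d) (Fin d) ℂ)
    (hper : Function.Periodic B 1)
    (hana : ∀ x i j, AnalyticAt ℝ (fun t => B t i j) x)
    (hm : ∀ x, Module.finrank ℂ (LinearMap.ker (B x).mulVecLin) = m) :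
    ∃ Q : ℝ → Matrix (Fin d) (Fin d) ℂ,
      (Function.Periodic Q 1 ∧ ∀ x i j, AnalyticAt ℝ (fun t => Q t i j) x) ∧
      ∀ x, (Q x * Q x = Q x ∧ (Q x)ᴴ = Q x) ∧
        LinearMap.range (Q x).mulVecLin = LinearMap.ker (B x).mulVecLin := by
  refine ⟨fun x => Qmat m ((B x)ᴴ * B x), ⟨fun x => by simp only [hper x], ?_⟩,
    fun x => ⟨(Qmat_spec (B x) m (hm x)).2.1, (Qmat_spec (B x) m (hm x)).2.2⟩⟩
  have hNana : ∀ x i j, AnalyticAt ℝ (fun t => ((B t)ᴴ * B t) i j) x :=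
    analyticAt_mul_entry _ _ (analyticAt_conjTranspose_entry B hana) hana
  exact analyticAt_Qmat m (fun t => (B t)ᴴ * B t) hNana
    (fun x => (Qmat_spec (B x) m (hm x)).1)

end Stmt13Aux




end Aux

/-- If `A(x)` is analytic 1-periodic and `P(x)` is an analytic 1-periodic
family of orthogonal projections of rank `k`, and the dimension of the preimage
`A(x)⁻¹(ran P(x))` is constant in `x`, then the family of orthogonal projections onto
`A(x)⁻¹(ran P(x))` is real analytic and 1-periodic. In particular, if `dim ker A(x)` is
constant then the family of orthogonal projections onto `ker A(x)` is real analytic and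
1-periodic. -/
theorem stmt_13 {d k : ℕ} (A P : ℝ → Matrix (Fin d) (Fin d) ℂ)
    (hA : AnalyticPeriodicMat A)
    (hP : AnalyticPeriodicMat P)
    (hPproj : ∀ x : ℝ, IsOrthProj (P x))
    (hPrank : ∀ x : ℝ, (P x).rank = k) :
    ((∃ m : ℕ, ∀ x : ℝ,
        Module.finrank ℂ ((matRange (P x)).comap (A x).mulVecLin) = m) →
      ∃ Q : ℝ → Matrix (Fin d) (Fin d) ℂ,
        AnalyticPeriodicMat Q ∧
        ∀ x : ℝ, IsOrthProj (Q x) ∧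
          matRange (Q x) = (matRange (P x)).comap (A x).mulVecLin) ∧
    ((∃ m : ℕ, ∀ x : ℝ, Module.finrank ℂ (LinearMap.ker (A x).mulVecLin) = m) →
      ∃ Q : ℝ → Matrix (Fin d) (Fin d) ℂ,
        AnalyticPeriodicMat Q ∧
        ∀ x : ℝ, IsOrthProj (Q x) ∧
          matRange (Q x) = LinearMap.ker (A x).mulVecLin) := by
  obtain ⟨hAper, hAana⟩ := hA
  obtain ⟨hPper, hPana⟩ := hP
  constructor
  · rintro ⟨m, hm⟩
    set B : ℝ → Matrix (Fin d) (Fin d) ℂ := fun x => (1 - P x) * A x with hBdef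
    have hker : ∀ x, LinearMap.ker (B x).mulVecLin = (matRange (P x)).comap (A x).mulVecLin := by
      intro x
      ext v
      simp only [LinearMap.mem_ker, Submodule.mem_comap, Matrix.mulVecLin_apply, matRange,
        LinearMap.mem_range, hBdef]
      rw [← Matrix.mulVec_mulVec, Matrix.sub_mulVec, Matrix.one_mulVec]
      constructor
      · intro h
        exact ⟨A x *ᵥ v, (sub_eq_zero.mp h).symm⟩
      · rintro ⟨w, hw⟩
        have hPP : P x *ᵥ (A x *ᵥ v) = A x *ᵥ v := by
          rw [← hw, Matrix.mulVec_mulVec, (hPproj x).1]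
        rw [hPP, sub_self]
    have hBper : Function.Periodic B 1 := by
      intro x
      simp only [hBdef, hPper x, hAper x]
    have hBana : ∀ x i j, AnalyticAt ℝ (fun t => B t i j) x := by
      have h1 : ∀ x i j, AnalyticAt ℝ (fun t => (1 - P t) i j) x := by
        intro x i j
        have h : (fun t => (1 - P t) i j) =
            fun t => (1 : Matrix (Fin d) (Fin d) ℂ) i j - P t i j := by
          funext t; rw [Matrix.sub_apply]
        rw [h]
        exact analyticAt_const.sub (hPana x i j)
      exact Stmt13Aux.analyticAt_mul_entry _ _ h1 hAana
    have hmB : ∀ x, Module.finrank ℂ (LinearMap.ker (B x).mulVecLin) = m := by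
      intro x; rw [hker x]; exact hm x
    obtain ⟨Q, ⟨hQper, hQana⟩, hQ⟩ := Stmt13Aux.exists_proj m B hBper hBana hmB
    exact ⟨Q, ⟨hQper, hQana⟩, fun x => ⟨⟨(hQ x).1.1, (hQ x).1.2⟩, by
      rw [matRange, (hQ x).2, hker x]⟩⟩
  · rintro ⟨m, hm⟩
    obtain ⟨Q, ⟨hQper, hQana⟩, hQ⟩ := Stmt13Aux.exists_proj m A hAper hAana hm
    exact ⟨Q, ⟨hQper, hQana⟩, fun x => ⟨⟨(hQ x).1.1, (hQ x).1.2⟩, by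
      rw [matRange, (hQ x).2]⟩⟩
end

section
/- Let P, Q : ℝ → ℂ^{d×d} be real analytic and 1-periodic, with each P(x) and Q(x) an orthogonal projection of constant ranks k and k' respectively. If dim(ran P(x) ∩ ran Q(x)) is constant in x, then the map assigning to x the orthogonal projection onto ran P(x) ∩ ran Q(x) is real analytic and 1-periodic; likewise, if dim(ran P(x) + ran Q(x)) is constant in x, then the map assigning to x the orthogonal projection onto ran P(x) + ran Q(x) is real analytic and 1-periodic. -/
open MeasureTheory Filter Topology Matrix

namespace Stmt14Aux
open Polynomial
open scoped ComplexOrder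
variable {d : ℕ}


lemma analyticAt_det {e : ℕ} (A : ℝ → Matrix (Fin e) (Fin e) ℂ) (x : ℝ)
    (hA : ∀ (x : ℝ) (i j : Fin e), AnalyticAt ℝ (fun t => A t i j) x) :
    AnalyticAt ℝ (fun t => (A t).det) x := by
  simp only [Matrix.det_apply']
  exact Finset.analyticAt_fun_sum _ fun σ _ =>
    analyticAt_const.mul (Finset.analyticAt_fun_prod _ fun i _ => hA x (σ i) i)

lemma charpoly_eval {d : ℕ} (M : Matrix (Fin d) (Fin d) ℂ) (t : ℂ) :
    M.charpoly.eval t = (Matrix.diagonal (fun _ => t) - M).det := by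
  rw [Matrix.charpoly, show (Polynomial.eval t : ℂ[X] → ℂ) = Polynomial.evalRingHom t from rfl,
    RingHom.map_det]
  congr 1
  ext i j
  by_cases h : i = j
  · subst h; simp [Matrix.charmatrix_apply, Matrix.diagonal_apply_eq]
  · simp [Matrix.charmatrix_apply, Matrix.diagonal_apply_ne _ h, h]

lemma analyticAt_charpoly_coeff {d : ℕ} (A : ℝ → Matrix (Fin d) (Fin d) ℂ)
    (hA : ∀ (x : ℝ) (i j : Fin d), AnalyticAt ℝ (fun t => A t i j) x) (n : ℕ) (x : ℝ) :
    AnalyticAt ℝ (fun t => (A t).charpoly.coeff n) x := by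
  have hinj : Set.InjOn (fun i : ℕ => (i : ℂ)) ↑(Finset.range (d + 1)) :=
    Set.injOn_of_injective Nat.cast_injective
  have key : ∀ t : ℝ, (A t).charpoly.coeff n
      = ∑ i ∈ Finset.range (d + 1),
          ((Matrix.diagonal (fun _ : Fin d => (i : ℂ)) - A t).det) *
            (Lagrange.basis (Finset.range (d + 1)) (fun i : ℕ => (i : ℂ)) i).coeff n := by
    intro t
    have hdeg : ((A t).charpoly).degree < (Finset.range (d + 1)).card := by
      rw [Finset.card_range, Matrix.charpoly_degree_eq_dim, Fintype.card_fin]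
      exact_mod_cast Nat.lt_succ_self d
    conv_lhs => rw [Lagrange.eq_interpolate hinj hdeg]
    rw [Lagrange.interpolate_apply, Polynomial.finset_sum_coeff]
    refine Finset.sum_congr rfl fun i _ => ?_
    rw [Polynomial.coeff_C_mul, charpoly_eval]
  simp only [key]
  refine Finset.analyticAt_fun_sum _ fun i _ => (analyticAt_det _ x ?_).mul analyticAt_const
  intro y a b
  simp only [Matrix.sub_apply]
  exact analyticAt_const.sub (hA y a b)

lemma analyticAt_pow_entry {d : ℕ} (A : ℝ → Matrix (Fin d) (Fin d) ℂ)
    (hA : ∀ (x : ℝ) (i j : Fin d), AnalyticAt ℝ (fun t => A t i j) x) (n : ℕ) (x : ℝ)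
    (i j : Fin d) : AnalyticAt ℝ (fun t => ((A t) ^ n) i j) x := by
  induction n generalizing i j with
  | zero => simp only [pow_zero]; exact analyticAt_const
  | succ n ih =>
    simp only [pow_succ, Matrix.mul_apply]
    exact Finset.analyticAt_fun_sum _ fun k _ => (ih i k).mul (hA x k j)

lemma aeval_unitary_conj {d : ℕ} (U D : Matrix (Fin d) (Fin d) ℂ)
    (hU : U * star U = 1) (hU' : star U * U = 1) (q : ℂ[X]) :
    Polynomial.aeval (U * D * star U) q = U * Polynomial.aeval D q * star U := by
  have hpow : ∀ n : ℕ, (U * D * star U) ^ n = U * D ^ n * star U := by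
    intro n
    induction n with
    | zero => simp [hU]
    | succ n ih =>
      rw [pow_succ, pow_succ, ih]
      calc U * D ^ n * star U * (U * D * star U)
          = U * D ^ n * (star U * U) * D * star U := by
            simp only [Matrix.mul_assoc]
        _ = U * (D ^ n * D) * star U := by
            rw [hU']; simp only [Matrix.mul_one, Matrix.mul_assoc]
  induction q using Polynomial.induction_on' with
  | add f g hf hg => rw [map_add, map_add, hf, hg, mul_add, add_mul]
  | monomial n a =>
    rw [Polynomial.aeval_monomial, Polynomial.aeval_monomial, hpow]
    simp only [Algebra.algebraMap_eq_smul_one, smul_mul_assoc, one_mul, Matrix.mul_smul,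
      Matrix.smul_mul]

lemma aeval_diagonal {d : ℕ} (v : Fin d → ℂ) (q : ℂ[X]) :
    Polynomial.aeval (Matrix.diagonal v) q = Matrix.diagonal (fun i => q.eval (v i)) := by
  induction q using Polynomial.induction_on' with
  | add f g hf hg =>
    rw [map_add, hf, hg, Matrix.diagonal_add]
    congr 1; funext i; simp
  | monomial n a =>
    rw [Polynomial.aeval_monomial, Algebra.algebraMap_eq_smul_one, Matrix.diagonal_pow,
      smul_mul_assoc, one_mul]
    ext i j
    by_cases h : i = j
    · subst h; simp [Polynomial.eval_monomial]
    · simp [Matrix.diagonal_apply_ne _ h, h]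

/-- The polynomial functional-calculus projection onto the range of a Hermitian matrix of
rank `s`. -/
noncomputable def projF {d : ℕ} (s : ℕ) (M : Matrix (Fin d) (Fin d) ℂ) :
    Matrix (Fin d) (Fin d) ℂ :=
  (-(M.charpoly.coeff (d - s))⁻¹) •
    ((∑ i ∈ Finset.range (s + 1), (M.charpoly.coeff (d - s + i)) • M ^ i)
      - (M.charpoly.coeff (d - s)) • 1)

lemma projF_spec {d : ℕ} (M : Matrix (Fin d) (Fin d) ℂ) (hM : M.IsHermitian) {s : ℕ}
    (hrank : M.rank = s) :
    M.charpoly.coeff (d - s) ≠ 0 ∧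
    projF s M * projF s M = projF s M ∧ (projF s M)ᴴ = projF s M ∧
    M * projF s M = M ∧ projF s M * M = M ∧
    ∃ B, projF s M = M * B ∧ projF s M = B * M := by
  classical
  set U : Matrix (Fin d) (Fin d) ℂ := (hM.eigenvectorUnitary : Matrix (Fin d) (Fin d) ℂ) with hUdef
  have hU : U * star U = 1 := (Matrix.mem_unitaryGroup_iff).mp hM.eigenvectorUnitary.2
  have hU' : star U * U = 1 := (Matrix.mem_unitaryGroup_iff').mp hM.eigenvectorUnitary.2
  set μ : Fin d → ℝ := hM.eigenvalues with hmu
  set lam : Fin d → ℂ := fun i => (μ i : ℂ) with hlam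
  have hspec : M = U * Matrix.diagonal lam * star U := hM.spectral_theorem
  -- characteristic polynomial
  have hcp : M.charpoly = ∏ i : Fin d, (X - C (lam i)) := by
    apply Polynomial.funext
    intro t
    rw [charpoly_eval]
    have h1 : Matrix.diagonal (fun _ : Fin d => t) - M
        = U * Matrix.diagonal (fun i => t - lam i) * star U := by
      have h2 : Matrix.diagonal (fun _ : Fin d => t) = U * Matrix.diagonal (fun _ : Fin d => t) * star U := by
        have : Matrix.diagonal (fun _ : Fin d => t) = t • (1 : Matrix (Fin d) (Fin d) ℂ) := by
          rw [Matrix.smul_one_eq_diagonal]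
        rw [this, Matrix.mul_smul, Matrix.smul_mul, Matrix.mul_one, hU]
      conv_lhs => rw [h2, hspec]
      have h3 : (Matrix.diagonal fun i => t - lam i)
          = Matrix.diagonal (fun _ : Fin d => t) - Matrix.diagonal lam := by
        rw [Matrix.diagonal_sub]
      rw [h3, Matrix.mul_sub, Matrix.sub_mul]
    rw [h1, Matrix.det_mul, Matrix.det_mul, mul_comm, ← mul_assoc, ← Matrix.det_mul, hU',
      Matrix.det_one, one_mul, Matrix.det_diagonal]
    rw [Polynomial.eval_prod]
    simp
  set T : Finset (Fin d) := Finset.univ.filter (fun i => ¬ μ i = 0) with hT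
  have hcard : T.card = s := by
    rw [← hrank, hM.rank_eq_card_non_zero_eigs]
    simp [T, Fintype.card_subtype]
    rfl
  have hsled : s ≤ d := by
    rw [← hcard]; exact le_trans (Finset.card_le_univ T) (by simp)
  set g : ℂ[X] := ∏ i ∈ T, (X - C (lam i)) with hg
  have hsplit : M.charpoly = X ^ (d - s) * g := by
    rw [hcp, ← Finset.prod_filter_mul_prod_filter_not Finset.univ (fun i => μ i = 0)]
    congr 1
    · rw [Finset.prod_congr rfl (fun i hi => ?_), Finset.prod_const]
      · congr 1
        have := Finset.card_filter_add_card_filter_not (s := (Finset.univ : Finset (Fin d)))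
          (fun i => μ i = 0)
        rw [Finset.card_univ, Fintype.card_fin] at this
        have hTcard : (Finset.univ.filter (fun i => ¬ μ i = 0)).card = s := hcard
        omega
      · have : μ i = 0 := (Finset.mem_filter.mp hi).2
        simp [hlam, this]
  have hgdeg : g.natDegree = s := by
    rw [hg, Polynomial.natDegree_prod _ _ (fun i _ => Polynomial.X_sub_C_ne_zero _)]
    simp [hcard]
  set c : ℂ := g.coeff 0 with hc0
  have hc : M.charpoly.coeff (d - s) = c := by
    rw [hsplit]
    have := Polynomial.coeff_X_pow_mul g (d - s) 0
    rwa [zero_add] at this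
  have hcoeffs : ∀ i : ℕ, M.charpoly.coeff (d - s + i) = g.coeff i := by
    intro i
    rw [hsplit]
    have := Polynomial.coeff_X_pow_mul g (d - s) i
    rwa [add_comm i (d - s)] at this
  have hgeval0 : g.eval 0 = c := by rw [hc0, Polynomial.coeff_zero_eq_eval_zero]
  have hcne : c ≠ 0 := by
    rw [hc0, Polynomial.coeff_zero_eq_eval_zero, hg, Polynomial.eval_prod]
    refine Finset.prod_ne_zero_iff.mpr fun i hi => ?_
    have : μ i ≠ 0 := (Finset.mem_filter.mp hi).2
    simp only [Polynomial.eval_sub, Polynomial.eval_X, Polynomial.eval_C, zero_sub, neg_ne_zero,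
      hlam]
    exact_mod_cast this
  set p : ℂ[X] := C (-(c⁻¹)) * (g - C c) with hp
  have hprojF : projF s M = Polynomial.aeval M p := by
    rw [hp, _root_.map_mul, Polynomial.aeval_C, _root_.map_sub, Polynomial.aeval_C]
    have hsum : Polynomial.aeval M g = ∑ i ∈ Finset.range (s + 1), g.coeff i • M ^ i :=
      Polynomial.aeval_eq_sum_range' (by rw [hgdeg]; omega) M
    rw [hsum]
    unfold projF
    simp only [hcoeffs, hc]
    rw [Algebra.algebraMap_eq_smul_one, Algebra.algebraMap_eq_smul_one, smul_mul_assoc, one_mul]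
  set e : Fin d → ℂ := fun i => p.eval (lam i) with he
  have hpeval : ∀ y : ℂ, p.eval y = (-(c⁻¹)) * (g.eval y - c) := by
    intro y; rw [hp]; simp
  have he0 : ∀ i, μ i = 0 → e i = 0 := by
    intro i h
    show p.eval (lam i) = 0
    have hl : lam i = 0 := by simp [hlam, h]
    rw [hl, hpeval, hgeval0, sub_self, mul_zero]
  have he1 : ∀ i, μ i ≠ 0 → e i = 1 := by
    intro i h
    have hiT : i ∈ T := by simp [hT, h]
    have hgz : g.eval (lam i) = 0 := by
      rw [hg, Polynomial.eval_prod]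
      exact Finset.prod_eq_zero hiT (by simp)
    show p.eval (lam i) = 1
    rw [hpeval, hgz, zero_sub, neg_mul_neg, inv_mul_cancel₀ hcne]
  have hNdiag : projF s M = U * Matrix.diagonal e * star U := by
    rw [hprojF]
    conv_lhs => rw [hspec]
    rw [aeval_unitary_conj U _ hU hU' p, aeval_diagonal]
  have hee : Matrix.diagonal e * Matrix.diagonal e = Matrix.diagonal e := by
    have hfun : (fun i => e i * e i) = e := by
      funext i
      by_cases h : μ i = 0
      · rw [he0 i h]; ring
      · rw [he1 i h]; ring
    rw [Matrix.diagonal_mul_diagonal, hfun]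
  have hestar : star (Matrix.diagonal e) = Matrix.diagonal e := by
    have hfun : star e = e := by
      funext i
      by_cases h : μ i = 0
      · rw [Pi.star_apply, he0 i h]; simp
      · rw [Pi.star_apply, he1 i h]; simp
    rw [Matrix.star_eq_conjTranspose, Matrix.diagonal_conjTranspose, hfun]
  have hlefun : (fun i => lam i * e i) = lam := by
    funext i
    by_cases h : μ i = 0
    · have : lam i = 0 := by simp [hlam, h]
      rw [this, zero_mul]
    · rw [he1 i h, mul_one]
  have hle : Matrix.diagonal lam * Matrix.diagonal e = Matrix.diagonal lam := by
    rw [Matrix.diagonal_mul_diagonal, hlefun]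
  have hel : Matrix.diagonal e * Matrix.diagonal lam = Matrix.diagonal lam := by
    have hfun : (fun i => e i * lam i) = lam := by
      funext i
      by_cases h : μ i = 0
      · have : lam i = 0 := by simp [hlam, h]
        rw [this, mul_zero]
      · rw [he1 i h, one_mul]
    rw [Matrix.diagonal_mul_diagonal, hfun]
  refine ⟨by rw [hc]; exact hcne, ?_, ?_, ?_, ?_, ?_⟩
  · rw [hNdiag]
    calc (U * Matrix.diagonal e * star U) * (U * Matrix.diagonal e * star U)
        = U * (Matrix.diagonal e * (star U * U) * Matrix.diagonal e) * star U := by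
          simp only [Matrix.mul_assoc]
      _ = U * Matrix.diagonal e * star U := by
          rw [hU', Matrix.mul_one, hee]
  · rw [hNdiag, ← Matrix.star_eq_conjTranspose]
    simp only [StarMul.star_mul, star_star, hestar, Matrix.mul_assoc]
  · conv_lhs => rw [hNdiag, hspec]
    conv_rhs => rw [hspec]
    calc (U * Matrix.diagonal lam * star U) * (U * Matrix.diagonal e * star U)
        = U * (Matrix.diagonal lam * (star U * U) * Matrix.diagonal e) * star U := by
          simp only [Matrix.mul_assoc]
      _ = U * Matrix.diagonal lam * star U := by
          rw [hU', Matrix.mul_one, hle, Matrix.mul_assoc]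
  · conv_lhs => rw [hNdiag, hspec]
    conv_rhs => rw [hspec]
    calc (U * Matrix.diagonal e * star U) * (U * Matrix.diagonal lam * star U)
        = U * (Matrix.diagonal e * (star U * U) * Matrix.diagonal lam) * star U := by
          simp only [Matrix.mul_assoc]
      _ = U * Matrix.diagonal lam * star U := by
          rw [hU', Matrix.mul_one, hel, Matrix.mul_assoc]
  · refine ⟨(-(c⁻¹)) • ∑ i ∈ Finset.range s, (M.charpoly.coeff (d - s + (i + 1))) • M ^ i,
      ?_, ?_⟩
    · have hsum : (∑ i ∈ Finset.range (s + 1), (M.charpoly.coeff (d - s + i)) • M ^ i)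
          - (M.charpoly.coeff (d - s)) • 1
          = ∑ i ∈ Finset.range s, (M.charpoly.coeff (d - s + (i + 1))) • M ^ (i + 1) := by
        rw [Finset.sum_range_succ']
        simp
      unfold projF
      rw [hsum, hc, Matrix.mul_smul, Finset.mul_sum]
      congr 1
      refine Finset.sum_congr rfl fun i _ => ?_
      rw [Matrix.mul_smul, ← pow_succ']
    · have hsum : (∑ i ∈ Finset.range (s + 1), (M.charpoly.coeff (d - s + i)) • M ^ i)
          - (M.charpoly.coeff (d - s)) • 1
          = ∑ i ∈ Finset.range s, (M.charpoly.coeff (d - s + (i + 1))) • M ^ (i + 1) := by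
        rw [Finset.sum_range_succ']
        simp
      unfold projF
      rw [hsum, hc, Matrix.smul_mul, Finset.sum_mul]
      congr 1
      refine Finset.sum_congr rfl fun i _ => ?_
      rw [Matrix.smul_mul, ← pow_succ]



lemma range_eq_of (M N B : Matrix (Fin d) (Fin d) ℂ) (hNM : N * M = M) (hB : N = M * B) :
    LinearMap.range N.mulVecLin = LinearMap.range M.mulVecLin := by
  apply le_antisymm
  · rintro _ ⟨v, rfl⟩
    refine ⟨B *ᵥ v, ?_⟩
    rw [Matrix.mulVecLin_apply, Matrix.mulVecLin_apply, Matrix.mulVec_mulVec, ← hB]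
  · rintro _ ⟨v, rfl⟩
    refine ⟨M *ᵥ v, ?_⟩
    rw [Matrix.mulVecLin_apply, Matrix.mulVecLin_apply, Matrix.mulVec_mulVec, hNM]

lemma ker_eq_of (M N B : Matrix (Fin d) (Fin d) ℂ) (hMN : M * N = M) (hB : N = B * M) :
    LinearMap.ker N.mulVecLin = LinearMap.ker M.mulVecLin := by
  ext v
  simp only [LinearMap.mem_ker, Matrix.mulVecLin_apply]
  constructor
  · intro h
    conv_lhs => rw [← hMN]
    rw [← Matrix.mulVec_mulVec, h, Matrix.mulVec_zero]
  · intro h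
    rw [hB, ← Matrix.mulVec_mulVec, h, Matrix.mulVec_zero]

lemma ker_add_proj (P Q : Matrix (Fin d) (Fin d) ℂ) (hP : P * P = P ∧ Pᴴ = P)
    (hQ : Q * Q = Q ∧ Qᴴ = Q) :
    LinearMap.ker (P + Q).mulVecLin = LinearMap.ker P.mulVecLin ⊓ LinearMap.ker Q.mulVecLin := by
  ext v
  simp only [LinearMap.mem_ker, Submodule.mem_inf, Matrix.mulVecLin_apply]
  constructor
  · intro h
    have key : ∀ (R : Matrix (Fin d) (Fin d) ℂ), R * R = R → Rᴴ = R →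
        star v ⬝ᵥ (R *ᵥ v) = star (R *ᵥ v) ⬝ᵥ (R *ᵥ v) := by
      intro R hRR hRH
      calc star v ⬝ᵥ (R *ᵥ v) = star v ⬝ᵥ (R *ᵥ (R *ᵥ v)) := by
            rw [Matrix.mulVec_mulVec, hRR]
        _ = (star v ᵥ* R) ⬝ᵥ (R *ᵥ v) := Matrix.dotProduct_mulVec _ _ _
        _ = star (R *ᵥ v) ⬝ᵥ (R *ᵥ v) := by rw [Matrix.star_mulVec, hRH]
    have h0 : star v ⬝ᵥ (P *ᵥ v) + star v ⬝ᵥ (Q *ᵥ v) = 0 := by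
      rw [← dotProduct_add, ← Matrix.add_mulVec, h, dotProduct_zero]
    rw [key P hP.1 hP.2, key Q hQ.1 hQ.2] at h0
    have h1 := dotProduct_star_self_nonneg (P *ᵥ v)
    have h2 := dotProduct_star_self_nonneg (Q *ᵥ v)
    constructor
    · refine dotProduct_star_self_eq_zero.mp (le_antisymm ?_ h1)
      rw [eq_neg_of_add_eq_zero_left h0]
      exact neg_nonpos_of_nonneg h2
    · refine dotProduct_star_self_eq_zero.mp (le_antisymm ?_ h2)
      rw [eq_neg_of_add_eq_zero_right h0]
      exact neg_nonpos_of_nonneg h1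
  · rintro ⟨h1, h2⟩
    rw [Matrix.add_mulVec, h1, h2, add_zero]

lemma ker_one_sub_proj (P : Matrix (Fin d) (Fin d) ℂ) (hP : P * P = P) :
    LinearMap.ker (1 - P).mulVecLin = LinearMap.range P.mulVecLin := by
  ext v
  simp only [LinearMap.mem_ker, LinearMap.mem_range, Matrix.mulVecLin_apply]
  rw [Matrix.sub_mulVec, Matrix.one_mulVec, sub_eq_zero]
  constructor
  · intro h; exact ⟨v, h.symm⟩
  · rintro ⟨w, rfl⟩
    rw [Matrix.mulVec_mulVec, hP]

lemma range_one_sub_proj (P : Matrix (Fin d) (Fin d) ℂ) (hP : P * P = P) :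
    LinearMap.range (1 - P).mulVecLin = LinearMap.ker P.mulVecLin := by
  ext v
  simp only [LinearMap.mem_ker, LinearMap.mem_range, Matrix.mulVecLin_apply]
  constructor
  · rintro ⟨w, rfl⟩
    rw [Matrix.mulVec_mulVec, Matrix.mul_sub, Matrix.mul_one, hP, sub_self, Matrix.zero_mulVec]
  · intro h
    exact ⟨v, by rw [Matrix.sub_mulVec, Matrix.one_mulVec, h, sub_zero]⟩

lemma rank_add_proj (P Q : Matrix (Fin d) (Fin d) ℂ) (hP : P * P = P ∧ Pᴴ = P)
    (hQ : Q * Q = Q ∧ Qᴴ = Q) :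
    Module.finrank ℂ ↥(LinearMap.range P.mulVecLin ⊔ LinearMap.range Q.mulVecLin)
      = (P + Q).rank ∧
    LinearMap.range (P + Q).mulVecLin
      = LinearMap.range P.mulVecLin ⊔ LinearMap.range Q.mulVecLin := by
  set B : Matrix (Fin d) (Fin d ⊕ Fin d) ℂ := Matrix.fromCols P Q with hBdef
  have hrangeB : LinearMap.range B.mulVecLin
      = LinearMap.range P.mulVecLin ⊔ LinearMap.range Q.mulVecLin := by
    apply le_antisymm
    · rintro _ ⟨v, rfl⟩
      have hv : v = Sum.elim (v ∘ Sum.inl) (v ∘ Sum.inr) := by funext i; cases i <;> rfl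
      rw [Matrix.mulVecLin_apply, hBdef, hv, Matrix.fromCols_mulVec_sumElim]
      exact Submodule.add_mem_sup ⟨_, rfl⟩ ⟨_, rfl⟩
    · rw [sup_le_iff]
      constructor
      · rintro _ ⟨v, rfl⟩
        refine ⟨Sum.elim v 0, ?_⟩
        rw [Matrix.mulVecLin_apply, hBdef, Matrix.fromCols_mulVec_sumElim]
        simp
      · rintro _ ⟨v, rfl⟩
        refine ⟨Sum.elim 0 v, ?_⟩
        rw [Matrix.mulVecLin_apply, hBdef, Matrix.fromCols_mulVec_sumElim]
        simp
  have hkerBH : LinearMap.ker (Bᴴ).mulVecLin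
      = LinearMap.ker P.mulVecLin ⊓ LinearMap.ker Q.mulVecLin := by
    ext v
    simp only [LinearMap.mem_ker, Submodule.mem_inf, Matrix.mulVecLin_apply]
    rw [hBdef, Matrix.conjTranspose_fromCols_eq_fromRows_conjTranspose, hP.2, hQ.2,
      Matrix.fromRows_mulVec]
    constructor
    · intro h
      constructor
      · funext i; exact congrFun h (Sum.inl i)
      · funext i; exact congrFun h (Sum.inr i)
    · rintro ⟨h1, h2⟩
      rw [h1, h2]
      funext i; cases i <;> rfl
  have hd : Module.finrank ℂ (Fin d → ℂ) = d := by simp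
  have hRN1 := LinearMap.finrank_range_add_finrank_ker (Bᴴ).mulVecLin
  have hRN2 := LinearMap.finrank_range_add_finrank_ker (P + Q).mulVecLin
  rw [hd] at hRN1 hRN2
  have hkadd := ker_add_proj P Q hP hQ
  have hrkB : (Bᴴ).rank = B.rank := Matrix.rank_conjTranspose B
  have hBrank : Module.finrank ℂ ↥(LinearMap.range (Bᴴ).mulVecLin) = B.rank := hrkB
  have hsum_rank : (P + Q).rank
      = Module.finrank ℂ ↥(LinearMap.range P.mulVecLin ⊔ LinearMap.range Q.mulVecLin) := by
    have e1 : Module.finrank ℂ ↥(LinearMap.ker (P + Q).mulVecLin)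
        = Module.finrank ℂ ↥(LinearMap.ker (Bᴴ).mulVecLin) := by rw [hkadd, hkerBH]
    have e2 : (P + Q).rank = Module.finrank ℂ ↥(LinearMap.range (P + Q).mulVecLin) := rfl
    rw [← hrangeB]
    have e3 : Module.finrank ℂ ↥(LinearMap.range B.mulVecLin) = B.rank := rfl
    rw [e3, ← hBrank]
    omega
  refine ⟨hsum_rank.symm, ?_⟩
  have hle : LinearMap.range (P + Q).mulVecLin
      ≤ LinearMap.range P.mulVecLin ⊔ LinearMap.range Q.mulVecLin := by
    rintro _ ⟨v, rfl⟩
    rw [Matrix.mulVecLin_apply, Matrix.add_mulVec]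
    exact Submodule.add_mem_sup ⟨_, rfl⟩ ⟨_, rfl⟩
  exact Submodule.eq_of_le_of_finrank_eq hle hsum_rank

lemma mainN (s : ℕ) (A : ℝ → Matrix (Fin d) (Fin d) ℂ) (hA : AnalyticPeriodicMat A)
    (hherm : ∀ x, (A x).IsHermitian) (hrank : ∀ x, (A x).rank = s) :
    AnalyticPeriodicMat (fun x => projF s (A x)) ∧
    ∀ x, IsOrthProj (projF s (A x)) ∧
      LinearMap.range (projF s (A x)).mulVecLin = LinearMap.range (A x).mulVecLin ∧
      LinearMap.ker (projF s (A x)).mulVecLin = LinearMap.ker (A x).mulVecLin := by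
  have hspec := fun x => projF_spec (A x) (hherm x) (hrank x)
  constructor
  · constructor
    · intro x
      simp only []
      rw [hA.1 x]
    · intro x i j
      have hform : (fun t => projF s (A t) i j) = fun t =>
          (-((A t).charpoly.coeff (d - s))⁻¹) *
            ((∑ i' ∈ Finset.range (s + 1),
                ((A t).charpoly.coeff (d - s + i')) * ((A t) ^ i') i j)
              - (A t).charpoly.coeff (d - s) * (1 : Matrix (Fin d) (Fin d) ℂ) i j) := by
        funext t
        simp [projF, Matrix.sub_apply, Matrix.sum_apply, smul_eq_mul]
      rw [hform]
      have hcoeff : ∀ n : ℕ, AnalyticAt ℝ (fun t => (A t).charpoly.coeff n) x :=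
        fun n => analyticAt_charpoly_coeff A hA.2 n x
      refine AnalyticAt.mul ?_ ?_
      · exact ((hcoeff (d - s)).inv (hspec x).1).neg
      · refine AnalyticAt.sub ?_ ((hcoeff (d - s)).mul analyticAt_const)
        exact Finset.analyticAt_fun_sum _ fun n _ =>
          (hcoeff (d - s + n)).mul (analyticAt_pow_entry A hA.2 n x i j)
  · intro x
    obtain ⟨hc, hPP, hPH, hMP, hPM, B, hB1, hB2⟩ := hspec x
    refine ⟨⟨hPP, hPH⟩, range_eq_of (A x) _ B hPM hB1, ker_eq_of (A x) _ B hMP hB2⟩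


end Stmt14Aux

open Stmt14Aux in
/-- If `P(x)`, `Q(x)` are analytic 1-periodic families of orthogonal
projections of constant ranks `k` and `k'`, then: if `dim (ran P(x) ∩ ran Q(x))` is constant
in `x`, the family of orthogonal projections onto `ran P(x) ∩ ran Q(x)` is real analytic and
1-periodic; likewise if `dim (ran P(x) + ran Q(x))` is constant in `x`, the family of
orthogonal projections onto `ran P(x) + ran Q(x)` is real analytic and 1-periodic. -/
theorem stmt_14 {d k k' : ℕ} (P Q : ℝ → Matrix (Fin d) (Fin d) ℂ)
    (hP : AnalyticPeriodicMat P)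
    (hQ : AnalyticPeriodicMat Q)
    (hPproj : ∀ x : ℝ, IsOrthProj (P x))
    (hQproj : ∀ x : ℝ, IsOrthProj (Q x))
    (hPrank : ∀ x : ℝ, (P x).rank = k)
    (hQrank : ∀ x : ℝ, (Q x).rank = k') :
    ((∃ m : ℕ, ∀ x : ℝ, Module.finrank ℂ ↥(matRange (P x) ⊓ matRange (Q x)) = m) →
      ∃ R : ℝ → Matrix (Fin d) (Fin d) ℂ,
        AnalyticPeriodicMat R ∧
        ∀ x : ℝ, IsOrthProj (R x) ∧
          matRange (R x) = matRange (P x) ⊓ matRange (Q x)) ∧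
    ((∃ m : ℕ, ∀ x : ℝ, Module.finrank ℂ ↥(matRange (P x) ⊔ matRange (Q x)) = m) →
      ∃ R : ℝ → Matrix (Fin d) (Fin d) ℂ,
        AnalyticPeriodicMat R ∧
        ∀ x : ℝ, IsOrthProj (R x) ∧
          matRange (R x) = matRange (P x) ⊔ matRange (Q x)) := by
  constructor
  · -- intersection case
    rintro ⟨m, hm⟩
    set A' : ℝ → Matrix (Fin d) (Fin d) ℂ := fun x => (1 - P x) + (1 - Q x) with hA'
    have hP' : ∀ x, (1 - P x) * (1 - P x) = 1 - P x ∧ (1 - P x)ᴴ = 1 - P x := by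
      intro x
      obtain ⟨h1, h2⟩ := hPproj x
      constructor
      · rw [Matrix.sub_mul, Matrix.one_mul, Matrix.mul_sub, Matrix.mul_one, h1]
        simp
      · rw [Matrix.conjTranspose_sub, Matrix.conjTranspose_one, h2]
    have hQ' : ∀ x, (1 - Q x) * (1 - Q x) = 1 - Q x ∧ (1 - Q x)ᴴ = 1 - Q x := by
      intro x
      obtain ⟨h1, h2⟩ := hQproj x
      constructor
      · rw [Matrix.sub_mul, Matrix.one_mul, Matrix.mul_sub, Matrix.mul_one, h1]
        simp
      · rw [Matrix.conjTranspose_sub, Matrix.conjTranspose_one, h2]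
    have hkerA' : ∀ x, LinearMap.ker (A' x).mulVecLin = matRange (P x) ⊓ matRange (Q x) := by
      intro x
      show LinearMap.ker ((1 - P x) + (1 - Q x)).mulVecLin = _
      rw [ker_add_proj _ _ (hP' x) (hQ' x), ker_one_sub_proj _ (hPproj x).1,
        ker_one_sub_proj _ (hQproj x).1]
      rfl
    have hrankA' : ∀ x, (A' x).rank = d - m := by
      intro x
      have h0 := LinearMap.finrank_range_add_finrank_ker (A' x).mulVecLin
      have hd : Module.finrank ℂ (Fin d → ℂ) = d := by simp
      rw [hd, hkerA' x] at h0
      have hmx : Module.finrank ℂ ↥(matRange (P x) ⊓ matRange (Q x)) = m := hm x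
      rw [hmx] at h0
      have e : (A' x).rank + m = d := h0
      omega
    have hA'per : AnalyticPeriodicMat A' := by
      constructor
      · intro x
        simp only [hA']
        rw [hP.1 x, hQ.1 x]
      · intro x i j
        have hform : (fun t => A' t i j) = fun t =>
            ((1 : Matrix (Fin d) (Fin d) ℂ) i j - P t i j)
              + ((1 : Matrix (Fin d) (Fin d) ℂ) i j - Q t i j) := by
          funext t
          simp [hA', Matrix.add_apply, Matrix.sub_apply]
        rw [hform]
        exact (analyticAt_const.sub (hP.2 x i j)).add (analyticAt_const.sub (hQ.2 x i j))
    have hA'herm : ∀ x, (A' x).IsHermitian := by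
      intro x
      show (A' x)ᴴ = A' x
      show ((1 - P x) + (1 - Q x))ᴴ = _
      rw [Matrix.conjTranspose_add, (hP' x).2, (hQ' x).2]
    obtain ⟨hNap, hNspec⟩ := mainN (d - m) A' hA'per hA'herm hrankA'
    refine ⟨fun x => 1 - projF (d - m) (A' x), ⟨?_, ?_⟩, ?_⟩
    · intro x
      have h : projF (d - m) (A' (x + 1)) = projF (d - m) (A' x) := hNap.1 x
      exact congrArg (fun M => 1 - M) h
    · intro x i j
      have hform : (fun t => (1 - projF (d - m) (A' t)) i j) = fun t =>
          (1 : Matrix (Fin d) (Fin d) ℂ) i j - projF (d - m) (A' t) i j := by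
        funext t
        simp [Matrix.sub_apply]
      rw [hform]
      exact analyticAt_const.sub (hNap.2 x i j)
    · intro x
      obtain ⟨⟨hNN, hNH⟩, hNr, hNk⟩ := hNspec x
      refine ⟨⟨?_, ?_⟩, ?_⟩
      · rw [Matrix.mul_sub, Matrix.mul_one, Matrix.sub_mul, Matrix.one_mul, hNN]
        simp
      · rw [Matrix.conjTranspose_sub, Matrix.conjTranspose_one, hNH]
      · show LinearMap.range (1 - projF (d - m) (A' x)).mulVecLin = _
        rw [range_one_sub_proj _ hNN, hNk, hkerA' x]
  · -- sum case
    rintro ⟨m, hm⟩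
    set A2 : ℝ → Matrix (Fin d) (Fin d) ℂ := fun x => P x + Q x with hA2
    have hradd := fun x => rank_add_proj (P x) (Q x) ⟨(hPproj x).1, (hPproj x).2⟩
      ⟨(hQproj x).1, (hQproj x).2⟩
    have hrank2 : ∀ x, (A2 x).rank = m := by
      intro x
      show (P x + Q x).rank = m
      rw [← (hradd x).1]
      exact hm x
    have hA2per : AnalyticPeriodicMat A2 := by
      constructor
      · intro x
        simp only [hA2]
        rw [hP.1 x, hQ.1 x]
      · intro x i j
        have hform : (fun t => A2 t i j) = fun t => P t i j + Q t i j := by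
          funext t
          simp [hA2, Matrix.add_apply]
        rw [hform]
        exact (hP.2 x i j).add (hQ.2 x i j)
    have hA2herm : ∀ x, (A2 x).IsHermitian := by
      intro x
      show (P x + Q x)ᴴ = _
      rw [Matrix.conjTranspose_add, (hPproj x).2, (hQproj x).2]
    obtain ⟨hNap, hNspec⟩ := mainN m A2 hA2per hA2herm hrank2
    refine ⟨fun x => projF m (A2 x), hNap, ?_⟩
    intro x
    obtain ⟨hproj, hNr, hNk⟩ := hNspec x
    refine ⟨hproj, ?_⟩
    show LinearMap.range (projF m (A2 x)).mulVecLin = _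
    rw [hNr]
    exact (hradd x).2
end

section
/- Let X be a compact, connected, real analytic manifold and μ a Borel probability measure on X whose pushforward under every analytic chart has a continuous density with respect to Lebesgue measure. Suppose g : X → ℂ is real analytic and not identically zero. Then μ{x ∈ X : g(x) = 0} = 0. -/
open MeasureTheory Filter Topology

open Metric

-- Lemma 2: zero set of a 1-D analytic function, not identically zero, is null
lemma oneDim_null {h : ℝ → ℂ} {t₀ c : ℝ} (hc : 0 < c)
    (hh : AnalyticOnNhd ℝ h (ball t₀ (2*c))) (hne : h (t₀ + c) ≠ 0) :
    volume {t | t ∈ ball t₀ (2*c) ∧ h t = 0} = 0 := by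
  set Z := {t | t ∈ ball t₀ (2*c) ∧ h t = 0} with hZ
  apply measure_null_of_locally_null
  intro t ht
  rcases (hh t ht.1).eventually_eq_zero_or_eventually_ne_zero with hev | hev
  · exfalso
    have := hh.eqOn_zero_of_preconnected_of_eventuallyEq_zero
      (convex_ball t₀ (2*c)).isPreconnected ht.1 hev
    apply hne
    have : h (t₀ + c) = 0 := this (by
      simp [mem_ball, Real.dist_eq, abs_of_pos hc]; linarith)
    exact this
  · rw [eventually_nhdsWithin_iff] at hev
    refine ⟨Z ∩ {y | y ≠ t → h y ≠ 0}, ?_, ?_⟩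
    · exact inter_mem_nhdsWithin _ (by simp at hev; exact hev)
    · have hsub : Z ∩ {y | y ≠ t → h y ≠ 0} ⊆ {t} := by
        rintro y ⟨hy2, hy1⟩
        by_contra hyt
        exact hy1 (fun he => hyt (by simp [he])) hy2.2
      exact le_antisymm ((measure_mono hsub).trans (by simp)) (zero_le)

lemma affine_analyticAt {n : ℕ} {f : EuclideanSpace ℝ (Fin n) → ℂ}
    (w u : EuclideanSpace ℝ (Fin n)) {t : ℝ}
    (hf : AnalyticAt ℝ f (w + t • u)) :
    AnalyticAt ℝ (fun s : ℝ => f (w + s • u)) t := by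
  have haff : AnalyticAt ℝ (fun s : ℝ => w + s • u) t :=
    analyticAt_const.add ((analyticAt_id).smul analyticAt_const)
  exact AnalyticAt.comp (g := f) (f := fun s : ℝ => w + s • u) (by simpa using hf) haff

lemma loc_null {n : ℕ} {f : EuclideanSpace ℝ (Fin n) → ℂ} {z₀ : EuclideanSpace ℝ (Fin n)}
    (hf : AnalyticAt ℝ f z₀) (hz : ¬ ∀ᶠ z in 𝓝 z₀, f z = 0) :
    ∃ s ∈ 𝓝 z₀, volume {z ∈ s | f z = 0} = 0 := by
  by_cases hf0 : f z₀ = 0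
  swap
  · refine ⟨{z | f z ≠ 0}, hf.continuousAt.preimage_mem_nhds (compl_singleton_mem_nhds hf0), ?_⟩
    have : {z ∈ {z | f z ≠ 0} | f z = 0} = ∅ := by ext z; simp
    simp [this]
  rcases n with - | m
  · exact absurd (Filter.Eventually.of_forall fun z => by
      rwa [Subsingleton.elim z z₀]) hz
  obtain ⟨r, hr, hanB⟩ : ∃ r > 0, ∀ z ∈ ball z₀ r, AnalyticAt ℝ f z := by
    rcases Metric.eventually_nhds_iff_ball.mp hf.eventually_analyticAt with ⟨r, hr, h⟩
    exact ⟨r, hr, h⟩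
  obtain ⟨z₁, hz₁ball, hz₁⟩ : ∃ z₁ ∈ ball z₀ (r/4), f z₁ ≠ 0 := by
    have h1 : ∃ᶠ z in 𝓝 z₀, ¬ f z = 0 := Filter.not_eventually.mp hz
    have h2 : ∀ᶠ z in 𝓝 z₀, z ∈ ball z₀ (r/4) := ball_mem_nhds _ (by positivity)
    rcases (h1.and_eventually h2).exists with ⟨z₁, hz₁, hz₁b⟩
    exact ⟨z₁, hz₁b, hz₁⟩
  have hz₁0 : z₁ ≠ z₀ := fun h => hz₁ (by rw [h]; exact hf0)
  set v : EuclideanSpace ℝ (Fin (m+1)) := z₁ - z₀ with hv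
  have hvne : v ≠ 0 := sub_ne_zero.mpr hz₁0
  set c := ‖v‖ with hc
  have hcpos : 0 < c := norm_pos_iff.mpr hvne
  set u : EuclideanSpace ℝ (Fin (m+1)) := c⁻¹ • v with hudef
  have hu : ‖u‖ = 1 := by
    rw [hudef, norm_smul, norm_inv, hc, Real.norm_of_nonneg (norm_nonneg v)]
    exact inv_mul_cancel₀ (ne_of_gt hcpos)
  have hcu : c • u = v := by
    rw [hudef, smul_smul, mul_inv_cancel₀ (ne_of_gt hcpos), one_smul]
  obtain ⟨ε, hε, hεne⟩ : ∃ ε > 0, ∀ z ∈ ball z₁ ε, f z ≠ 0 := by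
    have : ∀ᶠ z in 𝓝 z₁, f z ≠ 0 :=
      ((hanB z₁ (ball_subset_ball (by linarith) hz₁ball)).continuousAt).eventually_ne hz₁
    rcases Metric.eventually_nhds_iff_ball.mp this with ⟨ε, hε, h⟩
    exact ⟨ε, hε, fun z hzb => h z hzb⟩
  have hcr : c < r/4 := by
    have := mem_ball.mp hz₁ball
    rwa [dist_eq_norm] at this
  set δ := min (min (ε/2) (r/4)) (c/2) with hδdef
  have hδpos : 0 < δ := lt_min (lt_min (by positivity) (by positivity)) (by positivity)
  have hδε : δ < ε := lt_of_le_of_lt ((min_le_left _ _).trans (min_le_left _ _)) (by linarith)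
  have hδr : δ ≤ r/4 := (min_le_left _ _).trans (min_le_right _ _)
  have hδc : δ < c := lt_of_le_of_lt (min_le_right _ _) (by linarith)
  -- the isometry sending `e₀` to `u`
  set e₀ : EuclideanSpace ℝ (Fin (m+1)) := EuclideanSpace.single (0 : Fin (m+1)) (1:ℝ) with he₀def
  have he₀ : ‖e₀‖ = 1 := by simp [he₀def]
  set L := Submodule.reflection (ℝ ∙ (e₀ - u))ᗮ with hLdef
  have hLe₀ : L e₀ = u := Submodule.reflection_sub (by rw [he₀, hu])
  set ψ := (MeasurableEquiv.toLp 2 (Fin (m+1) → ℝ)).symm with hψdef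
  set π := MeasurableEquiv.piFinSuccAbove (fun _ : Fin (m+1) => ℝ) 0 with hπdef
  set Φ : ℝ × (Fin m → ℝ) → EuclideanSpace ℝ (Fin (m+1)) :=
    fun p => L (ψ.symm (π.symm p)) with hΦdef
  have hΦmp : MeasurePreserving Φ volume volume :=
    L.measurePreserving.comp
      (((EuclideanSpace.volume_preserving_symm_measurableEquiv_toLp (Fin (m+1))).symm).comp
        (MeasureTheory.volume_preserving_piFinSuccAbove (fun _ : Fin (m+1) => ℝ) 0).symm)
  have key : ∀ (t : ℝ) (y : Fin m → ℝ), Φ (t, y) = Φ (0, y) + t • u := by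
    intro t y
    have hπs : ∀ s : ℝ, (π.symm (s, y) : Fin (m+1) → ℝ) = Fin.cons s y := by
      intro s
      show (Fin.insertNthEquiv (fun _ : Fin (m+1) => ℝ) 0) (s, y) = Fin.cons s y
      simp [Fin.insertNthEquiv, Fin.insertNth_zero']
    have hψlin : ψ.symm (π.symm (t, y)) = ψ.symm (π.symm (0, y)) + t • e₀ := by
      refine PiLp.ext fun j => ?_
      show (π.symm (t, y) : Fin (m+1) → ℝ) j
        = (π.symm (0, y) : Fin (m+1) → ℝ) j + t * e₀ j
      rw [hπs t, hπs 0]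
      induction j using Fin.cases with
      | zero => simp [he₀def]
      | succ i => simp [he₀def, Fin.succ_ne_zero i]
    rw [hΦdef]
    simp only [hψlin, map_add, LinearIsometryEquiv.map_smul, hLe₀]
  -- the compact zero set
  set S : Set (EuclideanSpace ℝ (Fin (m+1))) := closedBall z₀ δ ∩ f ⁻¹' {0} with hSdef
  have hδsub : closedBall z₀ δ ⊆ ball z₀ r := by
    intro z hzz
    have h1 : dist z z₀ ≤ δ := mem_closedBall.mp hzz
    exact mem_ball.mpr (by linarith)
  have hScl : IsClosed S := by
    have hcont : ContinuousOn f (closedBall z₀ δ) := fun z hzS =>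
      (hanB z (hδsub hzS)).continuousAt.continuousWithinAt
    exact hcont.preimage_isClosed_of_isClosed Metric.isClosed_closedBall isClosed_singleton
  have hSvol : volume S = 0 := by
    have hswap : MeasurePreserving (fun q : (Fin m → ℝ) × ℝ => Φ (q.2, q.1))
        ((volume : Measure (Fin m → ℝ)).prod (volume : Measure ℝ)) volume :=
      hΦmp.comp Measure.measurePreserving_swap
    have hmeas : MeasurableSet ((fun q : (Fin m → ℝ) × ℝ => Φ (q.2, q.1)) ⁻¹' S) :=
      hScl.measurableSet.preimage hswap.measurable
    have h0 : volume S
        = ((volume : Measure (Fin m → ℝ)).prod (volume : Measure ℝ))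
          ((fun q : (Fin m → ℝ) × ℝ => Φ (q.2, q.1)) ⁻¹' S) :=
      (hswap.measure_preimage hScl.measurableSet.nullMeasurableSet).symm
    rw [h0, Measure.prod_apply hmeas]
    have hslice : ∀ y : Fin m → ℝ, volume {t : ℝ | Φ (t, y) ∈ S} = 0 := by
      intro y
      rcases Set.eq_empty_or_nonempty {t : ℝ | Φ (t, y) ∈ S} with hemp | ⟨t₀, ht₀⟩
      · rw [hemp]; exact measure_empty
      set w := Φ (0, y) with hwdef
      have hwt : ∀ t : ℝ, Φ (t, y) = w + t • u := fun t => key t y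
      have hp₀ : w + t₀ • u ∈ closedBall z₀ δ ∧ f (w + t₀ • u) = 0 := by
        have := ht₀; rw [Set.mem_setOf_eq, hwt t₀] at this; exact this
      have hdist : ∀ t s : ℝ, dist (w + t • u) (w + s • u) = |t - s| := by
        intro t s
        rw [dist_eq_norm]
        have : (w + t • u) - (w + s • u) = (t - s) • u := by
          rw [sub_smul]; abel
        rw [this, norm_smul, hu, mul_one, Real.norm_eq_abs]
      have hanJ : AnalyticOnNhd ℝ (fun t => f (w + t • u)) (ball t₀ (2*c)) := by
        intro t htJ
        apply affine_analyticAt w u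
        apply hanB
        have h1 : dist (w + t • u) z₀ ≤ dist (w + t • u) (w + t₀ • u) + dist (w + t₀ • u) z₀ :=
          dist_triangle _ _ _
        have h2 : dist (w + t • u) (w + t₀ • u) < 2*c := by
          rw [hdist]; simpa [Real.dist_eq] using htJ
        have h3 : dist (w + t₀ • u) z₀ ≤ δ := mem_closedBall.mp hp₀.1
        exact mem_ball.mpr (by linarith)
      have hne' : f (w + (t₀ + c) • u) ≠ 0 := by
        apply hεne
        have : w + (t₀ + c) • u = (w + t₀ • u) + v := by
          rw [← hcu, add_smul]; abel
        rw [this, mem_ball]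
        have : dist ((w + t₀ • u) + v) z₁ = dist (w + t₀ • u) z₀ := by
          rw [hv]
          rw [dist_eq_norm, dist_eq_norm]
          congr 1
          abel
        rw [this]
        exact lt_of_le_of_lt (mem_closedBall.mp hp₀.1) (by linarith)
      have hZsub : {t : ℝ | Φ (t, y) ∈ S}
          ⊆ {t | t ∈ ball t₀ (2*c) ∧ (fun t => f (w + t • u)) t = 0} := by
        intro t ht
        rw [Set.mem_setOf_eq, hwt t] at ht
        constructor
        · have h1 : dist (w + t • u) z₀ ≤ δ := mem_closedBall.mp ht.1
          have h2 : dist (w + t₀ • u) z₀ ≤ δ := mem_closedBall.mp hp₀.1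
          have h3 : dist (w + t • u) (w + t₀ • u) ≤ 2*δ :=
            (dist_triangle _ z₀ _).trans (by rw [dist_comm z₀]; linarith)
          rw [hdist] at h3
          rw [mem_ball, Real.dist_eq]
          linarith
        · exact ht.2
      exact le_antisymm ((measure_mono hZsub).trans_eq
        (oneDim_null hcpos hanJ hne')) (zero_le)
    have : ∀ y : Fin m → ℝ, volume (Prod.mk y ⁻¹' ((fun q : (Fin m → ℝ) × ℝ => Φ (q.2, q.1)) ⁻¹' S)) = 0 := by
      intro y
      have : (Prod.mk y ⁻¹' ((fun q : (Fin m → ℝ) × ℝ => Φ (q.2, q.1)) ⁻¹' S))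
          = {t : ℝ | Φ (t, y) ∈ S} := rfl
      rw [this]; exact hslice y
    simp [this]
  refine ⟨ball z₀ δ, ball_mem_nhds _ hδpos, ?_⟩
  have hsub : {z ∈ ball z₀ δ | f z = 0} ⊆ S := fun z hz => ⟨ball_subset_closedBall hz.1, hz.2⟩
  exact le_antisymm ((measure_mono hsub).trans_eq hSvol) (zero_le)


/-- Let `X` be a compact, connected, real analytic manifold and `μ` a
Borel probability measure whose pushforward under every analytic chart has a continuous
density with respect to Lebesgue measure. If `g : X → ℂ` is real analytic and not
identically zero, then its zero set has `μ`-measure zero. -/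
theorem stmt_16 {ℓ : ℕ} {X : Type*} [TopologicalSpace X] [T2Space X] [CompactSpace X]
    [ConnectedSpace X] [ChartedSpace (EuclideanSpace ℝ (Fin ℓ)) X]
    [IsManifold (modelWithCornersSelf ℝ (EuclideanSpace ℝ (Fin ℓ))) (⊤ : WithTop ℕ∞) X]
    [MeasurableSpace X] [BorelSpace X]
    (μ : Measure X) [IsProbabilityMeasure μ]
    (hμ : HasContinuousChartDensity (ℓ := ℓ) μ)
    (g : X → ℂ) (hg : AnalyticOnMfd (ℓ := ℓ) g)
    (hg_ne : ∃ x : X, g x ≠ 0) :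
    μ {x : X | g x = 0} = 0 := by
  -- continuity of g
  have hgc : Continuous g := by
    rw [continuous_iff_continuousAt]
    intro x
    set c := chartAt (EuclideanSpace ℝ (Fin ℓ)) x with hcdef
    have h1 : ContinuousAt (g ∘ c.symm) (c x) := (hg x).continuousAt
    have h2 : ContinuousAt c x := c.continuousAt (mem_chart_source _ x)
    refine (h1.comp h2).congr ?_
    filter_upwards [c.open_source.mem_nhds (mem_chart_source _ x)] with y hy
    simp [Function.comp, c.left_inv hy]
  -- the set of points near which g vanishes identically
  set S : Set X := {x | ∀ᶠ y in 𝓝 x, g y = 0} with hSdef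
  have hSopen : IsOpen S := by
    rw [isOpen_iff_mem_nhds]
    intro x hx
    exact hx.eventually_nhds
  have hSclosed : IsClosed S := by
    apply isClosed_of_closure_subset
    intro x hx
    set c := chartAt (EuclideanSpace ℝ (Fin ℓ)) x with hcdef
    have h1 : ∀ᶠ w in 𝓝 (c x), AnalyticAt ℝ (g ∘ c.symm) w := (hg x).eventually_analyticAt
    obtain ⟨ρr, hρr, hball⟩ : ∃ ρr > 0,
        ball (c x) ρr ⊆ {w | AnalyticAt ℝ (g ∘ c.symm) w} := by
      rcases Metric.mem_nhds_iff.mp h1 with ⟨ρr, h₁, h₂⟩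
      exact ⟨ρr, h₁, h₂⟩
    have hN : c.source ∩ c ⁻¹' (ball (c x) ρr) ∈ 𝓝 x := by
      apply (c.isOpen_inter_preimage isOpen_ball).mem_nhds
      exact ⟨mem_chart_source _ x, mem_ball_self hρr⟩
    obtain ⟨y, hyN, hyS⟩ := mem_closure_iff_nhds.mp hx _ hN
    have hsy : y ∈ c.source := hyN.1
    have hyev : ∀ᶠ w in 𝓝 (c y), (g ∘ c.symm) w = 0 := by
      have ht : Filter.Tendsto c.symm (𝓝 (c y)) (𝓝 (c.symm (c y))) :=
        c.continuousAt_symm (c.map_source hsy)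
      rw [c.left_inv hsy] at ht
      exact ht.eventually hyS
    have hzero : Set.EqOn (g ∘ c.symm) 0 (ball (c x) ρr) :=
      AnalyticOnNhd.eqOn_zero_of_preconnected_of_eventuallyEq_zero
        (fun w hw => hball hw) (convex_ball _ _).isPreconnected hyN.2 hyev
    show ∀ᶠ z in 𝓝 x, g z = 0
    filter_upwards [hN] with z hz
    have := hzero hz.2
    simpa [Function.comp, c.left_inv hz.1] using this
  have hSempty : S = ∅ := by
    rcases isClopen_iff.mp ⟨hSclosed, hSopen⟩ with h | h
    · exact h
    · exfalso
      obtain ⟨x₀, hx₀⟩ := hg_ne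
      have hx₀S : x₀ ∈ S := h ▸ Set.mem_univ x₀
      exact hx₀ hx₀S.self_of_nhds
  have hS : ∀ x : X, ¬ ∀ᶠ y in 𝓝 x, g y = 0 := by
    intro x hx
    have : x ∈ S := hx
    rw [hSempty] at this
    exact this
  haveI : SecondCountableTopology X :=
    ChartedSpace.secondCountable_of_sigmaCompact (EuclideanSpace ℝ (Fin ℓ)) X
  apply measure_null_of_locally_null
  intro x hxZ
  set c := chartAt (EuclideanSpace ℝ (Fin ℓ)) x with hcdef
  obtain ⟨ρ, hρcont, hρeq⟩ := hμ x
  have hnev : ¬ ∀ᶠ w in 𝓝 (c x), (g ∘ c.symm) w = 0 := by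
    intro hev
    apply hS x
    have h2 : Filter.Tendsto c (𝓝 x) (𝓝 (c x)) := c.continuousAt (mem_chart_source _ x)
    filter_upwards [h2.eventually hev, c.open_source.mem_nhds (mem_chart_source _ x)]
      with z h1 h2'
    simpa [Function.comp, c.left_inv h2'] using h1
  obtain ⟨s, hs, hsvol⟩ := loc_null (hg x) hnev
  have hcxint : c x ∈ interior s := mem_interior_iff_mem_nhds.mpr hs
  set W := c.source ∩ c ⁻¹' (interior s) with hWdef
  have hWopen : IsOpen W := c.isOpen_inter_preimage isOpen_interior
  have hxW : x ∈ W := ⟨mem_chart_source _ x, hcxint⟩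
  refine ⟨{z | g z = 0} ∩ W, inter_mem_nhdsWithin _ (hWopen.mem_nhds hxW), ?_⟩
  set O := interior s ∩ c.target with hOdef
  have hOopen : IsOpen O := isOpen_interior.inter c.open_target
  have hUopen : IsOpen (O ∩ (g ∘ c.symm) ⁻¹' ({0}ᶜ)) := by
    have hcont : ContinuousOn (g ∘ c.symm) O :=
      (hgc.comp_continuousOn (c.continuousOn_symm.mono (fun w hw => hw.2)))
    exact hcont.isOpen_inter_preimage hOopen isOpen_compl_singleton
  set A := O \ (O ∩ (g ∘ c.symm) ⁻¹' ({0}ᶜ)) with hAdef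
  have hAmeas : MeasurableSet A := hOopen.measurableSet.diff hUopen.measurableSet
  have hAmem : ∀ w, w ∈ A ↔ (w ∈ O ∧ g (c.symm w) = 0) := by
    intro w
    rw [hAdef]
    simp only [Set.mem_diff, Set.mem_inter_iff, Set.mem_preimage, Set.mem_compl_iff,
      Set.mem_singleton_iff, Function.comp_apply]
    tauto
  have hsub : {z | g z = 0} ∩ W ⊆ c ⁻¹' A ∩ c.source := by
    rintro z ⟨hz0, hzs, hzo⟩
    refine ⟨?_, hzs⟩
    show c z ∈ A
    rw [hAmem]
    exact ⟨⟨hzo, c.map_source hzs⟩, by rw [c.left_inv hzs]; exact hz0⟩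
  have hc_aem : AEMeasurable c (μ.restrict c.source) :=
    c.continuousOn.aemeasurable c.open_source.measurableSet
  have step2 : μ (c ⁻¹' A ∩ c.source) = (μ.restrict c.source) (c ⁻¹' A) :=
    (Measure.restrict_apply' c.open_source.measurableSet).symm
  have step3 : (μ.restrict c.source) (c ⁻¹' A) = ((μ.restrict c.source).map c) A :=
    (Measure.map_apply_of_aemeasurable hc_aem hAmeas).symm
  have step5 : (volume.restrict c.target) A = 0 := by
    rw [Measure.restrict_apply' c.open_target.measurableSet]
    refine le_antisymm ?_ (zero_le)
    calc volume (A ∩ c.target) ≤ volume {w ∈ s | (g ∘ c.symm) w = 0} := by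
          apply measure_mono
          rintro w ⟨hwA, -⟩
          rw [hAmem] at hwA
          exact ⟨interior_subset hwA.1.1, hwA.2⟩
      _ = 0 := hsvol
  have step4 : ((μ.restrict c.source).map c) A = 0 := by
    rw [hρeq, withDensity_apply _ hAmeas]
    exact setLIntegral_measure_zero _ _ step5
  refine le_antisymm ?_ (zero_le)
  calc μ ({z | g z = 0} ∩ W) ≤ μ (c ⁻¹' A ∩ c.source) := measure_mono hsub
    _ = 0 := by rw [step2, step3, step4]
end
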